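/- arXiv:1310.5634 — 3 statements merged into one kernel-verified Lean document; each statement's English description precedes it below -/
import Mathlib

section
/- Let n be a positive even integer and let B be any n×n matrix all of whose entries are 0 or 1. Then per(B) · per(J_n − B) ≤ ((n/2)!)⁴, where J_n is the n×n all-ones matrix. Consequently, the maximum number of directed 2-factors of a bipartite tournament obtained by orienting the edges of K_{n,n} equals ((n/2)!)⁴. -/
set_option maxHeartbeats 1000000

open Nat Matrix

namespace Breg
open Real Finset

noncomputable def hfun (r : ℕ) : ℝ := Real.log (r !) / r

lemma log_ge {y : ℝ} (hy : 0 < y) : 1 - y⁻¹ ≤ Real.log y := by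
  have := Real.log_le_sub_one_of_pos (x := y⁻¹) (by positivity)
  rw [Real.log_inv] at this
  linarith

-- (r!)^2 * exp(r-1) ≤ r^(2r)
lemma fact_sq_bound : ∀ r : ℕ, 1 ≤ r → ((r ! : ℝ))^2 * Real.exp (r - 1) ≤ (r : ℝ)^(2*r) := by
  intro r hr
  induction r with
  | zero => omega
  | succ n ih =>
    rcases Nat.eq_or_lt_of_le hr with h|h
    · simp [← h]
    · have hn : 1 ≤ n := by omega
      have IH := ih hn
      have hnp : (0:ℝ) < n := by exact_mod_cast hn
      have key : Real.exp 1 * (n:ℝ)^(2*n) ≤ ((n:ℝ)+1)^(2*n) := by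
        have h3 : (3:ℝ) ≤ ((1 + (n:ℝ)⁻¹))^(2*n) := by
          have hb : (-2:ℝ) ≤ (n:ℝ)⁻¹ := by
            have : (0:ℝ) ≤ (n:ℝ)⁻¹ := by positivity
            linarith
          have : 1 + ((2*n:ℕ):ℝ) * (n:ℝ)⁻¹ ≤ (1 + (n:ℝ)⁻¹)^(2*n) :=
            one_add_mul_le_pow hb (2*n)
          have e2 : ((2*n:ℕ):ℝ) * (n:ℝ)⁻¹ = 2 := by
            push_cast; field_simp
          rw [e2] at this; linarith
        have he : Real.exp 1 ≤ 3 := by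
          have := Real.exp_one_lt_d9; linarith
        have hpow : ((1 + (n:ℝ)⁻¹))^(2*n) * (n:ℝ)^(2*n) = ((n:ℝ)+1)^(2*n) := by
          rw [← mul_pow]; congr 1; field_simp
        calc Real.exp 1 * (n:ℝ)^(2*n) ≤ 3 * (n:ℝ)^(2*n) := by
              apply mul_le_mul_of_nonneg_right he (by positivity)
          _ ≤ ((1 + (n:ℝ)⁻¹))^(2*n) * (n:ℝ)^(2*n) := by
              apply mul_le_mul_of_nonneg_right h3 (by positivity)
          _ = ((n:ℝ)+1)^(2*n) := hpow
      have hfac : (((n+1)! : ℕ) : ℝ) = ((n:ℝ)+1) * (n ! : ℕ) := by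
        push_cast [Nat.factorial_succ]; ring
      have hexp : Real.exp ((n+1:ℕ) - 1 : ℝ) = Real.exp 1 * Real.exp ((n:ℝ) - 1) := by
        rw [← Real.exp_add]; push_cast; ring_nf
      calc (((n+1)! : ℕ) : ℝ)^2 * Real.exp ((n+1:ℕ) - 1 : ℝ)
          = ((n:ℝ)+1)^2 * Real.exp 1 * ((n ! : ℕ):ℝ)^2 * Real.exp ((n:ℝ)-1) := by
            rw [hfac, hexp]; push_cast; ring
        _ ≤ ((n:ℝ)+1)^2 * Real.exp 1 * (n:ℝ)^(2*n) := by
            have h1 : ((n ! : ℕ):ℝ)^2 * Real.exp ((n:ℝ)-1) ≤ (n:ℝ)^(2*n) := by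
              have : ((n:ℕ):ℝ) - 1 = (n:ℝ) - 1 := by norm_num
              simpa [this] using IH
            calc ((n:ℝ)+1)^2 * Real.exp 1 * ((n ! : ℕ):ℝ)^2 * Real.exp ((n:ℝ)-1)
                = ((n:ℝ)+1)^2 * Real.exp 1 * (((n ! : ℕ):ℝ)^2 * Real.exp ((n:ℝ)-1)) := by ring
              _ ≤ ((n:ℝ)+1)^2 * Real.exp 1 * (n:ℝ)^(2*n) := by
                  apply mul_le_mul_of_nonneg_left h1 (by positivity)
        _ = ((n:ℝ)+1)^2 * (Real.exp 1 * (n:ℝ)^(2*n)) := by ring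
        _ ≤ ((n:ℝ)+1)^2 * ((n:ℝ)+1)^(2*n) := by
            apply mul_le_mul_of_nonneg_left key (by positivity)
        _ = ((n+1:ℕ):ℝ)^(2*(n+1)) := by push_cast; ring

lemma two_log_fact_le {r : ℕ} (hr : 1 ≤ r) :
    2 * Real.log (r !) ≤ 2 * r * Real.log r - (r - 1) := by
  have h := fact_sq_bound r hr
  have hrp : (0:ℝ) < r := by exact_mod_cast hr
  have hfp : (0:ℝ) < (r ! : ℕ) := by exact_mod_cast Nat.factorial_pos r
  have := Real.log_le_log (by positivity) h
  rw [Real.log_mul (by positivity) (Real.exp_ne_zero _), Real.log_pow, Real.log_exp,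
    Real.log_pow] at this
  push_cast at this ⊢
  linarith

-- second difference: hfun (s+2) + hfun s ≤ 2 * hfun (s+1), for s ≥ 1
lemma hfun_second_diff {s : ℕ} (hs : 1 ≤ s) :
    hfun (s+2) + hfun s ≤ 2 * hfun (s+1) := by
  set R : ℝ := (s:ℝ) + 1 with hR
  have hsp : (0:ℝ) < s := by exact_mod_cast hs
  have hRp : (0:ℝ) < R := by simp [hR]; linarith
  set L : ℝ := Real.log ((s+1)! : ℕ) with hL
  set a : ℝ := Real.log R with ha
  set b : ℝ := Real.log (R+1) with hb
  -- log (s+2)! = L + b,  log s! = L - a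
  have hfs2 : Real.log ((s+2)! : ℕ) = L + b := by
    have : ((s+2)! : ℕ) = (s+2) * (s+1)! := by rw [Nat.factorial_succ]
    rw [this]
    push_cast
    rw [Real.log_mul (by positivity) (by exact_mod_cast (Nat.factorial_pos (s+1)).ne')]
    rw [hL, hb, hR]; push_cast; ring_nf
  have hfs : Real.log ((s)! : ℕ) = L - a := by
    have : ((s+1)! : ℕ) = (s+1) * (s)! := by rw [Nat.factorial_succ]
    rw [hL, this]
    push_cast
    rw [Real.log_mul (by positivity) (by exact_mod_cast (Nat.factorial_pos s).ne')]
    rw [ha, hR]; push_cast; ring_nf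
  -- key: 2L ≤ R(R+1)a - R(R-1)b
  have h2L : 2 * L ≤ 2 * R * a - (R - 1) := by
    have := two_log_fact_le (r := s+1) (by omega)
    rw [← hL] at this; push_cast at this
    rw [ha, hR]; push_cast; linarith
  have hba : b - a ≤ R⁻¹ := by
    have : Real.log ((R+1)/R) ≤ (R+1)/R - 1 := Real.log_le_sub_one_of_pos (by positivity)
    rw [Real.log_div (by positivity) (by positivity)] at this
    rw [hb, ha]
    have : (R+1)/R - 1 = R⁻¹ := by field_simp; ring
    linarith [Real.log_le_sub_one_of_pos (x := (R+1)/R) (by positivity),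
      Real.log_div (show R+1 ≠ 0 by positivity) (show R ≠ 0 by positivity)]
  have key : 2 * L ≤ R*(R+1)*a - R*(R-1)*b := by
    have h1 : R*(R-1)*b ≤ R*(R-1)*a + (R-1) := by
      have hRR : (0:ℝ) ≤ R*(R-1) := by
        apply mul_nonneg (le_of_lt hRp); simp [hR]; try linarith
      have h2 := mul_le_mul_of_nonneg_left hba hRR
      have hinv : R*(R-1)*R⁻¹ = R - 1 := by field_simp; try ring
      have hexp : R*(R-1)*(b-a) = R*(R-1)*b - R*(R-1)*a := by ring
      rw [hinv, hexp] at h2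
      linarith
    nlinarith
  -- now convert to hfun form
  have e1 : hfun (s+2) = (L+b)/(R+1) := by
    rw [hfun, hfs2, hR]; push_cast; try ring
  have e2' : hfun s = (L-a)/(R-1) := by
    rw [hfun, hfs, hR]; push_cast; try ring
  have e3 : hfun (s+1) = L/R := by
    rw [hfun, ← hL, hR]; push_cast; try ring
  rw [e1, e2', e3]
  have hR1 : (0:ℝ) < R - 1 := by rw [hR]; push_cast; linarith
  rw [div_add_div _ _ (by positivity) (ne_of_gt hR1), mul_div_assoc',
    div_le_div_iff₀ (by positivity) (by positivity)]
  nlinarith [key, hRp, mul_le_mul_of_nonneg_left key (le_of_lt hRp)]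

noncomputable def Dh (r : ℕ) : ℝ := hfun (r+1) - hfun r

lemma Dh_anti : ∀ b a : ℕ, 1 ≤ a → a ≤ b → Dh b ≤ Dh a := by
  intro b
  induction b with
  | zero => intro a h1 h2; omega
  | succ n ih =>
    intro a h1 h2
    rcases Nat.eq_or_lt_of_le h2 with h|h
    · rw [h]
    · have hn1 : 1 ≤ n := by omega
      have := hfun_second_diff hn1
      have hd : Dh (n+1) ≤ Dh n := by rw [Dh, Dh]; linarith
      exact le_trans hd (ih a h1 (by omega))

lemma hfun_mid : ∀ (d m : ℕ), d + 1 ≤ m → hfun (m - d) + hfun (m + d) ≤ 2 * hfun m := by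
  intro d
  induction d with
  | zero => intro m _; simp; ring_nf; simp
  | succ c ih =>
    intro m hm
    have h1 : m - c - 1 + 1 = m - c := by omega
    have key : Dh (m + c) ≤ Dh (m - c - 1) := Dh_anti (m+c) (m-c-1) (by omega) (by omega)
    have e1 : m - (c+1) = m - c - 1 := by omega
    have e2 : m + (c+1) = (m + c) + 1 := by omega
    have ihm := ih m (by omega)
    rw [e1, e2]
    have d1 : hfun (m - c - 1) = hfun (m - c) - Dh (m - c - 1) := by
      rw [Dh, h1]; ring
    have d2 : hfun ((m+c)+1) = hfun (m + c) + Dh (m + c) := by rw [Dh]; ring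
    rw [d1, d2]; linarith

lemma hfun_pair {m r s : ℕ} (hr : 1 ≤ r) (hs : 1 ≤ s) (hrs : r + s = m + m) :
    hfun r + hfun s ≤ 2 * hfun m := by
  rcases le_total r m with h|h
  · rcases Nat.eq_or_lt_of_le h with h'|h'
    · have : s = m := by omega
      rw [h', this]; linarith
    · have hd : r = m - (m - r) := by omega
      have hsd : s = m + (m - r) := by omega
      rw [hd, hsd]; exact hfun_mid (m - r) m (by omega)
  · have hd : s = m - (m - s) := by omega
    have hsd : r = m + (m - s) := by omega
    have := hfun_mid (m - s) m (by omega)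
    rw [hd, hsd]; linarith

section SDR
variable {α β : Type} [Fintype α] [DecidableEq α] [Fintype β] [DecidableEq β]

def sdr (S : α → Finset β) : Finset (α ≃ β) :=
  Finset.univ.filter (fun e => ∀ a, e a ∈ S a)

def Nc (S : α → Finset β) : ℕ := (sdr S).card

lemma mem_sdr {S : α → Finset β} {e : α ≃ β} : e ∈ sdr S ↔ ∀ a, e a ∈ S a := by
  rw [sdr, Finset.mem_filter]
  simp

def minorS (S : α → Finset β) (i : α) (k : β) :
    {a : α // a ≠ i} → Finset {b : β // b ≠ k} :=
  fun a => ((S a.1).erase k).subtype (fun b => b ≠ k)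

lemma minorS_card (S : α → Finset β) (i : α) (k : β) (a : {a : α // a ≠ i}) :
    (minorS S i k a).card = (S a.1).card - (if k ∈ S a.1 then 1 else 0) := by
  rw [minorS, Finset.card_subtype]
  rw [Finset.filter_true_of_mem (fun b hb => (Finset.mem_erase.mp hb).1)]
  split
  · rw [Finset.card_erase_of_mem ‹k ∈ S a.1›]
  · rw [Finset.erase_eq_of_notMem ‹k ∉ S a.1›]; omega

def extEquiv (i : α) (k : β) (e' : {a : α // a ≠ i} ≃ {b : β // b ≠ k}) : α ≃ β where
  toFun a := if h : a = i then k else (e' ⟨a, h⟩).1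
  invFun b := if h : b = k then i else (e'.symm ⟨b, h⟩).1
  left_inv := by
    intro a
    by_cases h : a = i
    · simp [h]
    · simp only [dif_neg h, dif_neg (e' ⟨a, h⟩).2]
      congr
      rw [show (⟨(e' ⟨a,h⟩).1, (e' ⟨a,h⟩).2⟩ : {b : β // b ≠ k}) = e' ⟨a,h⟩ from rfl,
        Equiv.symm_apply_apply]
  right_inv := by
    intro b
    by_cases h : b = k
    · simp [h]
    · simp only [dif_neg h, dif_neg (e'.symm ⟨b, h⟩).2]
      congr
      rw [show (⟨(e'.symm ⟨b,h⟩).1, (e'.symm ⟨b,h⟩).2⟩ : {a : α // a ≠ i}) = e'.symm ⟨b,h⟩ from rfl,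
        Equiv.apply_symm_apply]

lemma extEquiv_apply_ne (i : α) (k : β) (e' : {a : α // a ≠ i} ≃ {b : β // b ≠ k})
    {a : α} (h : a ≠ i) : extEquiv i k e' a = (e' ⟨a, h⟩).1 := by
  simp [extEquiv, dif_neg h]

lemma extEquiv_apply_eq (i : α) (k : β) (e' : {a : α // a ≠ i} ≃ {b : β // b ≠ k}) :
    extEquiv i k e' i = k := by simp [extEquiv]

def resEquiv (i : α) (k : β) (e : α ≃ β) (hik : e i = k) :
    {a : α // a ≠ i} ≃ {b : β // b ≠ k} :=
  e.subtypeEquiv (fun a => by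
    constructor
    · intro h hk; exact h (e.injective (hk.trans hik.symm))
    · intro h ha; rw [ha, hik] at h; exact h rfl)

lemma resEquiv_apply (i : α) (k : β) (e : α ≃ β) (hik : e i = k) (a : {a : α // a ≠ i}) :
    (resEquiv i k e hik a).1 = e a.1 := rfl

lemma fiber_card (S : α → Finset β) (i : α) (k : β) :
    ((sdr S).filter (fun e => e i = k)).card
      = if k ∈ S i then Nc (minorS S i k) else 0 := by
  split
  case isFalse hk =>
    rw [Finset.card_eq_zero, Finset.filter_eq_empty_iff]
    intro e he hek
    rw [sdr, Finset.mem_filter] at he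
    exact hk (hek ▸ he.2 i)
  case isTrue hk =>
    rw [Nc]
    apply Finset.card_bij'
      (i := fun e he => resEquiv i k e (by
        simp only [Finset.mem_filter] at he; exact he.2))
      (j := fun e' _ => extEquiv i k e')
    · -- maps to
      intro e he
      simp only [Finset.mem_filter, sdr, Finset.mem_univ, true_and] at he ⊢
      intro a
      rw [minorS, Finset.mem_subtype]
      simp only [resEquiv_apply]
      rw [Finset.mem_erase]
      refine ⟨?_, he.1 a.1⟩
      intro hh
      exact a.2 (e.injective (by rw [hh, he.2]))
    · -- left inverse
      intro e he
      apply Equiv.ext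
      intro a
      by_cases h : a = i
      · simp only [Finset.mem_filter] at he
        rw [h, extEquiv_apply_eq, ← he.2]
      · rw [extEquiv_apply_ne i k _ h, resEquiv_apply]
    · -- right inverse
      intro e' he'
      apply Equiv.ext
      intro a
      apply Subtype.ext
      rw [resEquiv_apply, extEquiv_apply_ne i k e' a.2]
    · -- maps back
      intro e' he'
      simp only [Finset.mem_filter, sdr, Finset.mem_univ, true_and] at he' ⊢
      constructor
      · intro a
        by_cases h : a = i
        · rw [h, extEquiv_apply_eq]; exact hk
        · rw [extEquiv_apply_ne i k e' h]
          have := he' ⟨a, h⟩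
          rw [minorS, Finset.mem_subtype, Finset.mem_erase] at this
          exact this.2
      · exact extEquiv_apply_eq i k e'
end SDR

lemma nat_mul_hfun (y : ℕ) : (y:ℝ) * hfun y = Real.log (y !) := by
  rcases Nat.eq_zero_or_pos y with h|h
  · simp [h, hfun]
  · rw [hfun, mul_div_cancel₀]
    exact_mod_cast h.ne'

theorem bregman_log : ∀ (n : ℕ) (α β : Type) [Fintype α] [DecidableEq α]
    [Fintype β] [DecidableEq β] (S : α → Finset β), Fintype.card α = n →
    1 ≤ Nc S → Real.log (Nc S) ≤ ∑ a, hfun (S a).card := by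
  intro n
  induction n with
  | zero =>
    intro α β _ _ _ _ S hcard hN
    have : IsEmpty α := Fintype.card_eq_zero_iff.mp hcard
    have hsub : Subsingleton (α ≃ β) := ⟨fun e f => Equiv.ext (fun a => isEmptyElim a)⟩
    have hle : Nc S ≤ 1 := by
      calc Nc S ≤ Fintype.card (α ≃ β) := Finset.card_filter_le _ _
        _ ≤ 1 := Fintype.card_le_one_iff_subsingleton.mpr hsub
    have : Nc S = 1 := le_antisymm hle hN
    rw [this]
    simp
  | succ n IH =>
    intro α β _ _ _ _ S hcard hN
    set p : ℕ := Nc S with hp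
    have hpne : (sdr S).Nonempty := Finset.card_pos.mp hN
    obtain ⟨e₀, he₀mem⟩ := hpne
    have he₀ : ∀ a, e₀ a ∈ S a := (Finset.mem_filter.mp he₀mem).2
    have hcardβ : Fintype.card β = n + 1 := by
      rw [← Fintype.card_congr e₀, hcard]
    have hSne : ∀ a, 1 ≤ (S a).card := fun a =>
      Finset.card_pos.mpr ⟨e₀ a, he₀ a⟩
    set t : α → β → ℕ := fun i k => ((sdr S).filter (fun e => e i = k)).card with ht
    -- sum of fibers
    have hsum_t : ∀ i, ∑ k : β, t i k = p := by
      intro i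
      rw [hp, Nc, Finset.card_eq_sum_card_fiberwise (f := fun e => e i)
        (t := Finset.univ) (fun e _ => Finset.mem_univ _)]
    have ht_zero : ∀ i k, k ∉ S i → t i k = 0 := by
      intro i k hk
      rw [ht]; simp only []
      rw [fiber_card, if_neg hk]
    -- Step A : p log p ≤ p log r_i + Σ_k t log t
    have stepA : ∀ i : α, (p:ℝ) * Real.log p ≤
        (p:ℝ) * Real.log ((S i).card) + ∑ k : β, (t i k : ℝ) * Real.log (t i k) := by
      intro i
      set ri : ℕ := (S i).card with hri
      have hrip : (0:ℝ) < ri := by exact_mod_cast hSne i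
      have hpp : (0:ℝ) < p := by exact_mod_cast hN
      -- restrict sum to S i
      have hTsum : ∑ k ∈ S i, (t i k : ℝ) = p := by
        rw [← Nat.cast_sum]
        norm_cast
        rw [← hsum_t i]
        apply Finset.sum_subset (Finset.subset_univ _)
        intro k _ hk
        exact ht_zero i k hk
      have hpoint : ∀ k ∈ S i, (t i k : ℝ) - (p:ℝ)/ri ≤
          (t i k : ℝ) * Real.log (t i k) - (t i k : ℝ) * (Real.log p - Real.log ri) := by
        intro k _
        rcases Nat.eq_zero_or_pos (t i k) with h0|h0
        · rw [h0]; simp; positivity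
        · have htp : (0:ℝ) < t i k := by exact_mod_cast h0
          have hy : (0:ℝ) < (t i k : ℝ) * ri / p := by positivity
          have hlog := log_ge hy
          have e1 : Real.log ((t i k : ℝ) * ri / p)
              = Real.log (t i k) + Real.log ri - Real.log p := by
            rw [Real.log_div (by positivity) (by positivity),
              Real.log_mul (by positivity) (by positivity)]
          have e2 : ((t i k : ℝ) * ri / p)⁻¹ = (p:ℝ) / ((t i k : ℝ) * ri) := by
            field_simp
          rw [e1, e2] at hlog
          have := mul_le_mul_of_nonneg_left hlog (le_of_lt htp)
          have e3 : (t i k : ℝ) * (1 - (p:ℝ) / ((t i k : ℝ) * ri)) = (t i k : ℝ) - (p:ℝ)/ri := by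
            field_simp
          rw [e3] at this
          nlinarith
      have hsum := Finset.sum_le_sum hpoint
      rw [Finset.sum_sub_distrib, Finset.sum_sub_distrib, hTsum] at hsum
      have hconst : ∑ _k ∈ S i, (p:ℝ)/ri = p := by
        rw [Finset.sum_const, hri, nsmul_eq_mul]
        field_simp
        exact div_self (Nat.cast_pos.mpr (hSne i)).ne'
      rw [hconst] at hsum
      have hmul : ∑ k ∈ S i, (t i k : ℝ) * (Real.log p - Real.log ri)
          = (p:ℝ) * (Real.log p - Real.log ri) := by
        rw [← Finset.sum_mul, hTsum]
      rw [hmul] at hsum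
      have hext : ∑ k ∈ S i, (t i k : ℝ) * Real.log (t i k)
          = ∑ k : β, (t i k : ℝ) * Real.log (t i k) := by
        apply Finset.sum_subset (Finset.subset_univ _)
        intro k _ hk
        rw [ht_zero i k hk]; simp
      rw [hext] at hsum
      nlinarith [hsum]
    -- Step B : Σ_k t log t = Σ_{e ∈ sdr} log (t i (e i))
    have stepB : ∀ i : α, ∑ k : β, (t i k : ℝ) * Real.log (t i k)
        = ∑ e ∈ sdr S, Real.log (t i (e i)) := by
      intro i
      rw [← Finset.sum_fiberwise_of_maps_to (g := fun e : α ≃ β => e i)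
        (t := Finset.univ) (fun e _ => Finset.mem_univ _)
        (fun e => Real.log (t i (e i)))]
      apply Finset.sum_congr rfl
      intro k _
      have : ∀ e ∈ (sdr S).filter (fun e => e i = k),
          Real.log (t i (e i)) = Real.log (t i k) := by
        intro e he
        rw [(Finset.mem_filter.mp he).2]
      rw [Finset.sum_congr rfl this, Finset.sum_const, nsmul_eq_mul]
    -- Step C : log (t i (e i)) ≤ Σ_{a ∈ erase i} hfun (minor card)
    have stepC : ∀ i : α, ∀ e ∈ sdr S, Real.log (t i (e i)) ≤
        ∑ a ∈ Finset.univ.erase i, hfun ((S a).card - (if e i ∈ S a then 1 else 0)) := by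
      intro i e he
      have hei : e i ∈ S i := (Finset.mem_filter.mp he).2 i
      have htfc : t i (e i) = Nc (minorS S i (e i)) := by
        rw [ht]; simp only []
        rw [fiber_card, if_pos hei]
      have h1t : 1 ≤ t i (e i) :=
        Finset.card_pos.mpr ⟨e, Finset.mem_filter.mpr ⟨he, rfl⟩⟩
      have hcardsub : Fintype.card {a : α // a ≠ i} = n := by
        have h1 := Fintype.card_subtype_compl (fun a : α => a = i)
        rw [Fintype.card_subtype_eq i, hcard] at h1
        simpa using h1
      have hIH := IH {a : α // a ≠ i} {b : β // b ≠ e i}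
        (minorS S i (e i)) hcardsub (by rw [← htfc]; exact h1t)
      rw [← htfc] at hIH
      have hmc : ∀ a : {a : α // a ≠ i}, hfun (minorS S i (e i) a).card
          = hfun ((S a.1).card - (if e i ∈ S a.1 then 1 else 0)) := by
        intro a; rw [minorS_card]
      rw [Finset.sum_congr rfl (fun a _ => hmc a)] at hIH
      refine le_trans hIH (le_of_eq ?_)
      rw [← Finset.sum_subtype (Finset.univ.erase i)
        (fun a => by simp [Finset.mem_erase]) 
        (fun a => hfun ((S a).card - (if e i ∈ S a then 1 else 0)))]
    -- big F
    set F : α → β → ℝ := fun a b => hfun ((S a).card - (if b ∈ S a then 1 else 0)) with hF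
    -- chain1 : triple sum rewriting
    have chain1 : ∑ i : α, ∑ e ∈ sdr S, ∑ a ∈ Finset.univ.erase i, F a (e i)
        = ∑ e ∈ sdr S, ∑ a : α, ((∑ b : β, F a b) - F a (e a)) := by
      rw [Finset.sum_comm]
      apply Finset.sum_congr rfl
      intro e _
      have inner : ∀ i : α, ∑ a ∈ Finset.univ.erase i, F a (e i)
          = (∑ a : α, F a (e i)) - F i (e i) :=
        fun i => Finset.sum_erase_eq_sub (Finset.mem_univ i)
      rw [Finset.sum_congr rfl (fun i _ => inner i), Finset.sum_sub_distrib]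
      rw [Finset.sum_comm (s := Finset.univ) (t := Finset.univ)]
      have hre : ∀ a : α, ∑ i : α, F a (e i) = ∑ b : β, F a b :=
        fun a => Equiv.sum_comp e (fun b => F a b)
      rw [Finset.sum_congr rfl (fun a _ => hre a), ← Finset.sum_sub_distrib]
    -- chain3 : row sums of F
    have chain3 : ∀ a : α, ∑ b : β, F a b
        = ((S a).card : ℝ) * hfun ((S a).card - 1)
          + ((n:ℝ) + 1 - (S a).card) * hfun (S a).card := by
      intro a
      have : ∀ b : β, F a b = if b ∈ S a then hfun ((S a).card - 1) else hfun (S a).card := by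
        intro b
        by_cases h : b ∈ S a
        · rw [hF]; simp only [if_pos h]
        · rw [hF]; simp only [if_neg h, Nat.sub_zero]
      rw [Finset.sum_congr rfl (fun b _ => this b), Finset.sum_ite,
        Finset.sum_const, Finset.sum_const, nsmul_eq_mul, nsmul_eq_mul]
      have h1 : (Finset.univ.filter (fun b => b ∈ S a)).card = (S a).card := by
        rw [Finset.filter_univ_mem]
      have hle : (S a).card ≤ n + 1 := by
        rw [← hcardβ]; exact Finset.card_le_univ _
      have h2 : (Finset.univ.filter (fun b => ¬ b ∈ S a)).card = (n+1) - (S a).card := by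
        have hadd := Finset.card_filter_add_card_filter_not
          (s := (Finset.univ : Finset β)) (p := fun b => b ∈ S a)
        rw [Finset.card_univ, hcardβ, h1] at hadd
        omega
      rw [h1, h2]
      have : ((n + 1 - (S a).card : ℕ) : ℝ) = (n:ℝ) + 1 - (S a).card := by
        push_cast [Nat.cast_sub hle]; ring
      rw [this]
    -- chain4 : the per-row identity
    have chain4 : ∀ a : α, Real.log ((S a).card)
        + (((S a).card : ℝ) * hfun ((S a).card - 1)
          + ((n:ℝ) + 1 - (S a).card) * hfun (S a).card - hfun ((S a).card - 1))
        = ((n:ℝ) + 1) * hfun (S a).card := by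
      intro a
      set ra : ℕ := (S a).card with hra
      have hra1 : 1 ≤ ra := hSne a
      have c1 : ((ra:ℝ) - 1) * hfun (ra - 1) = Real.log ((ra - 1)!) := by
        have : ((ra:ℝ) - 1) = ((ra - 1 : ℕ) : ℝ) := by
          push_cast [Nat.cast_sub hra1]; ring
        rw [this, nat_mul_hfun]
      have c2 : Real.log ra + Real.log ((ra-1)!) = Real.log (ra !) := by
        rw [← Real.log_mul (by exact_mod_cast hra1.trans_lt (Nat.lt_succ_self ra) |> fun _ => (by exact_mod_cast Nat.one_le_iff_ne_zero.mp hra1 : (ra:ℝ) ≠ 0)) (by exact_mod_cast (Nat.factorial_pos (ra-1)).ne')]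
        congr 1
        rw [← Nat.cast_mul]
        congr 1
        exact Nat.mul_factorial_pred (by omega)
      have c3 : Real.log (ra !) = (ra:ℝ) * hfun ra := (nat_mul_hfun ra).symm
      have expand : Real.log ra + ((ra:ℝ) * hfun (ra - 1)
          + ((n:ℝ) + 1 - ra) * hfun ra - hfun (ra - 1))
          = Real.log ra + ((ra:ℝ) - 1) * hfun (ra-1) + ((n:ℝ) + 1 - ra) * hfun ra := by ring
      rw [expand, c1, c2, c3]; ring
    -- assemble
    have total : ((n:ℝ)+1) * ((p:ℝ) * Real.log p)
        ≤ ((n:ℝ)+1) * ((p:ℝ) * ∑ a : α, hfun (S a).card) := by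
      have big : ∀ i : α, (p:ℝ) * Real.log p ≤ (p:ℝ) * Real.log ((S i).card)
          + ∑ e ∈ sdr S, ∑ a ∈ Finset.univ.erase i, F a (e i) := by
        intro i
        refine le_trans (stepA i) ?_
        rw [stepB i]
        gcongr with e he
        exact stepC i e he
      have sum_big := Finset.sum_le_sum (fun i (_ : i ∈ Finset.univ) => big i)
      rw [Finset.sum_const, Finset.sum_add_distrib, chain1] at sum_big
      have hconst : ∀ e ∈ sdr S, ∑ a : α, ((∑ b : β, F a b) - F a (e a))
          = ∑ a : α, (Real.log ((S a).card) + (∑ b : β, F a b)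
              - hfun ((S a).card - 1) - Real.log ((S a).card)) := by
        intro e he
        apply Finset.sum_congr rfl
        intro a _
        have : F a (e a) = hfun ((S a).card - 1) := by
          rw [hF]
          have : e a ∈ S a := (Finset.mem_filter.mp he).2 a
          simp [this]
        rw [this]; ring
      rw [Finset.sum_congr rfl hconst, Finset.sum_const] at sum_big
      have inner_eq : ∑ a : α, (Real.log ((S a).card) + (∑ b : β, F a b)
          - hfun ((S a).card - 1) - Real.log ((S a).card))
          = ∑ a : α, (((n:ℝ) + 1) * hfun (S a).card - Real.log ((S a).card)) := by
        apply Finset.sum_congr rfl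
        intro a _
        have := chain4 a
        rw [chain3 a]
        linarith [chain4 a]
      rw [inner_eq] at sum_big
      rw [Finset.sum_sub_distrib, ← Finset.mul_sum] at sum_big
      have hpcard : (sdr S).card = p := rfl
      rw [hpcard] at sum_big
      rw [Finset.card_univ, hcard] at sum_big
      simp only [nsmul_eq_mul] at sum_big
      have hmulsum : ∑ x : α, (((n:ℝ) + 1) * hfun (S x).card)
          = ((n:ℝ)+1) * ∑ x : α, hfun (S x).card := by rw [Finset.mul_sum]
      rw [hmulsum] at sum_big
      push_cast at sum_big ⊢
      ring_nf at sum_big ⊢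
      linarith [sum_big]
    have hc : (0:ℝ) < ((n:ℝ)+1) := by positivity
    have hpp : (0:ℝ) < (p:ℝ) := by exact_mod_cast hN
    have h1 := (mul_le_mul_iff_right₀ hc).mp total
    exact (mul_le_mul_iff_right₀ hpp).mp h1


end Breg

/-- The permanent of a square integer matrix. -/
def perm {n : ℕ} (M : Matrix (Fin n) (Fin n) ℤ) : ℤ :=
  ∑ σ : Equiv.Perm (Fin n), ∏ i, M i (σ i)

/-- The `n×n` all-ones matrix. -/
def Jmat (n : ℕ) : Matrix (Fin n) (Fin n) ℤ :=
  Matrix.of fun _ _ => 1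


open Breg in
lemma perm_eq_Nc {N : ℕ} (B : Matrix (Fin N) (Fin N) ℤ)
    (hB : ∀ i j, B i j = 0 ∨ B i j = 1) :
    perm B = (Nc (fun i => Finset.univ.filter (fun j => B i j = 1)) : ℤ) := by
  rw [perm, Nc, sdr]
  have prodeq : ∀ σ : Equiv.Perm (Fin N), (∏ i, B i (σ i))
      = if (∀ a, σ a ∈ Finset.univ.filter (fun j => B a j = 1)) then (1:ℤ) else 0 := by
    intro σ
    by_cases h : ∀ a, σ a ∈ Finset.univ.filter (fun j => B a j = 1)
    · rw [if_pos h]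
      apply Finset.prod_eq_one
      intro i _
      exact (Finset.mem_filter.mp (h i)).2
    · rw [if_neg h]
      push_neg at h
      obtain ⟨a, ha⟩ := h
      apply Finset.prod_eq_zero (Finset.mem_univ a)
      rcases hB a (σ a) with h0|h1
      · exact h0
      · exact absurd (Finset.mem_filter.mpr ⟨Finset.mem_univ (σ a), h1⟩) ha
  rw [Finset.sum_congr rfl (fun σ _ => prodeq σ), Finset.sum_boole]
  simp [Finset.filter_congr_decidable]

open Breg in
lemma upper_bound {m : ℕ} (hm : 0 < m) (B : Matrix (Fin (m+m)) (Fin (m+m)) ℤ)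
    (hB : ∀ i j, B i j = 0 ∨ B i j = 1) :
    perm B * perm (Jmat (m+m) - B) ≤ ((m)! : ℤ)^4 := by
  set S : Fin (m+m) → Finset (Fin (m+m)) := fun i => Finset.univ.filter (fun j => B i j = 1) with hS
  have hB' : ∀ i j, (Jmat (m+m) - B) i j = 0 ∨ (Jmat (m+m) - B) i j = 1 := by
    intro i j
    rcases hB i j with h|h <;> simp [Jmat, Matrix.sub_apply, h]
  have h1 : perm B = (Nc S : ℤ) := perm_eq_Nc B hB
  have h2 : perm (Jmat (m+m) - B) = (Nc (fun i => (S i)ᶜ) : ℤ) := by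
    rw [perm_eq_Nc _ hB']
    congr 2
    funext i
    ext j
    rcases hB i j with h|h <;>
      simp [hS, Jmat, Matrix.sub_apply, Finset.mem_compl, Finset.mem_filter, h]
  have hfact : (0:ℤ) < ((m)! : ℤ)^4 := by positivity
  rcases Nat.eq_zero_or_pos (Nc S) with hp|hp
  · rw [h1, h2, hp]; simpa using le_of_lt hfact
  rcases Nat.eq_zero_or_pos (Nc (fun i => (S i)ᶜ)) with hq|hq
  · rw [h1, h2, hq]; simpa using le_of_lt hfact
  have hcard : Fintype.card (Fin (m+m)) = m+m := Fintype.card_fin (m+m)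
  have hlogp := bregman_log (m+m) (Fin (m+m)) (Fin (m+m)) S hcard hp
  have hlogq := bregman_log (m+m) (Fin (m+m)) (Fin (m+m)) (fun i => (S i)ᶜ) hcard hq
  -- row cardinalities
  obtain ⟨e₁, he₁⟩ := Finset.card_pos.mp (show 0 < (Breg.sdr S).card from hp)
  obtain ⟨e₂, he₂⟩ := Finset.card_pos.mp (show 0 < (Breg.sdr (fun i => (S i)ᶜ)).card from hq)
  have he₁' : ∀ a, e₁ a ∈ S a := Breg.mem_sdr.mp he₁
  have he₂' : ∀ a, e₂ a ∈ (S a)ᶜ := Breg.mem_sdr.mp he₂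
  have hrow : ∀ i, hfun (S i).card + hfun ((S i)ᶜ).card ≤ 2 * hfun m := by
    intro i
    apply hfun_pair
    · exact Finset.card_pos.mpr ⟨e₁ i, he₁' i⟩
    · exact Finset.card_pos.mpr ⟨e₂ i, he₂' i⟩
    · rw [Finset.card_compl, Fintype.card_fin]
      have h5 := Finset.card_le_univ (S i)
      rw [hcard] at h5
      omega
  have hsum : Real.log (Nc S) + Real.log (Nc (fun i => (S i)ᶜ))
      ≤ 4 * Real.log ((m)! : ℕ) := by
    have step1 : Real.log (Nc S) + Real.log (Nc (fun i => (S i)ᶜ))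
        ≤ ∑ i : Fin (m+m), (hfun (S i).card + hfun ((S i)ᶜ).card) := by
      rw [Finset.sum_add_distrib]
      exact add_le_add hlogp hlogq
    have step2 : ∑ i : Fin (m+m), (hfun (S i).card + hfun ((S i)ᶜ).card)
        ≤ ∑ _i : Fin (m+m), 2 * hfun m :=
      Finset.sum_le_sum (fun i _ => hrow i)
    have step3 : ∑ _i : Fin (m+m), 2 * hfun m = 4 * Real.log ((m)! : ℕ) := by
      rw [Finset.sum_const, Finset.card_univ, Fintype.card_fin, nsmul_eq_mul,
        ← nat_mul_hfun m]
      push_cast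
      ring
    linarith
  have hple : ((Nc S : ℝ)) * (Nc (fun i => (S i)ᶜ) : ℝ) ≤ ((m)! : ℕ) ^ 4 := by
    have hpp : (0:ℝ) < (Nc S : ℝ) := by exact_mod_cast hp
    have hqq : (0:ℝ) < (Nc (fun i => (S i)ᶜ) : ℝ) := by exact_mod_cast hq
    have hfp : (0:ℝ) < ((m)! : ℕ) := by exact_mod_cast Nat.factorial_pos m
    have hlog : Real.log ((Nc S : ℝ) * (Nc (fun i => (S i)ᶜ) : ℝ))
        ≤ Real.log (((m)! : ℕ) ^ 4 : ℝ) := by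
      rw [Real.log_mul (ne_of_gt hpp) (ne_of_gt hqq), Real.log_pow]
      push_cast
      linarith [hsum]
    exact (Real.log_le_log_iff (by positivity) (by positivity)).mp hlog
  rw [h1, h2]
  exact_mod_cast hple


lemma perm_eq_permanent {N : ℕ} (M : Matrix (Fin N) (Fin N) ℤ) : perm M = M.permanent := by
  rw [← Matrix.permanent_transpose]
  rfl

lemma permanent_reindex {γ δ : Type} [Fintype γ] [DecidableEq γ] [Fintype δ] [DecidableEq δ]
    (e : γ ≃ δ) (M : Matrix δ δ ℤ) :
    (M.submatrix e e).permanent = M.permanent := by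
  rw [Matrix.permanent, Matrix.permanent]
  apply Fintype.sum_equiv (Equiv.permCongr e)
  intro σ
  apply Fintype.prod_equiv e
  intro i
  simp [Matrix.submatrix_apply, Equiv.permCongr_apply]

lemma permanent_fromBlocks {m : ℕ} (A D : Matrix (Fin m) (Fin m) ℤ) :
    (Matrix.fromBlocks A 0 0 D).permanent = A.permanent * D.permanent := by
  classical
  set img : Finset (Equiv.Perm (Fin m ⊕ Fin m)) :=
    (Finset.univ : Finset (Equiv.Perm (Fin m) × Equiv.Perm (Fin m))).image
      (fun στ => Equiv.sumCongr στ.1 στ.2) with himg_def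
  have himg : ∀ σ : Equiv.Perm (Fin m ⊕ Fin m), σ ∉ img →
      (∏ i, (Matrix.fromBlocks A 0 0 D) (σ i) i) = 0 := by
    intro σ hσ
    by_cases hL : ∀ a : Fin m, ∃ a', σ (Sum.inl a) = Sum.inl a'
    · by_cases hR : ∀ b : Fin m, ∃ b', σ (Sum.inr b) = Sum.inr b'
      · exfalso
        apply hσ
        choose f hf using hL
        choose g hg using hR
        have hfinj : Function.Injective f := by
          intro a₁ a₂ h
          have : σ (Sum.inl a₁) = σ (Sum.inl a₂) := by rw [hf, hf, h]
          simpa using σ.injective this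
        have hginj : Function.Injective g := by
          intro a₁ a₂ h
          have : σ (Sum.inr a₁) = σ (Sum.inr a₂) := by rw [hg, hg, h]
          simpa using σ.injective this
        let σ₁ := Equiv.ofBijective f (Finite.injective_iff_bijective.mp hfinj)
        let σ₂ := Equiv.ofBijective g (Finite.injective_iff_bijective.mp hginj)
        rw [himg_def, Finset.mem_image]
        refine ⟨(σ₁, σ₂), Finset.mem_univ _, ?_⟩
        apply Equiv.ext
        intro x
        rcases x with a|b
        · simpa [σ₁, Equiv.ofBijective] using (hf a).symm
        · simpa [σ₂, Equiv.ofBijective] using (hg b).symm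
      · push_neg at hR
        obtain ⟨b, hb⟩ := hR
        apply Finset.prod_eq_zero (Finset.mem_univ (Sum.inr b))
        rcases h : σ (Sum.inr b) with a|b'
        · simp [Matrix.fromBlocks]
        · exact absurd h (hb b')
    · push_neg at hL
      obtain ⟨a, ha⟩ := hL
      apply Finset.prod_eq_zero (Finset.mem_univ (Sum.inl a))
      rcases h : σ (Sum.inl a) with a'|b
      · exact absurd h (ha a')
      · simp [Matrix.fromBlocks]
  rw [Matrix.permanent]
  rw [← Finset.sum_subset (Finset.subset_univ img) (fun σ _ hσ => himg σ hσ)]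
  have hinj : Set.InjOn (fun στ : Equiv.Perm (Fin m) × Equiv.Perm (Fin m) =>
      Equiv.sumCongr στ.1 στ.2) ((Finset.univ : Finset (Equiv.Perm (Fin m) × Equiv.Perm (Fin m))) : Set (Equiv.Perm (Fin m) × Equiv.Perm (Fin m))) := by
    intro x _ y _ hxy
    have h1 : x.1 = y.1 := by
      apply Equiv.ext
      intro a
      have := congrArg (fun E : Equiv.Perm (Fin m ⊕ Fin m) => E (Sum.inl a)) hxy
      simpa using this
    have h2 : x.2 = y.2 := by
      apply Equiv.ext
      intro a
      have := congrArg (fun E : Equiv.Perm (Fin m ⊕ Fin m) => E (Sum.inr a)) hxy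
      simpa using this
    exact Prod.ext h1 h2
  rw [himg_def, Finset.sum_image hinj]
  have hterm : ∀ στ : Equiv.Perm (Fin m) × Equiv.Perm (Fin m),
      (∏ i, (Matrix.fromBlocks A 0 0 D) ((Equiv.sumCongr στ.1 στ.2) i) i)
        = (∏ a, A (στ.1 a) a) * (∏ b, D (στ.2 b) b) := by
    intro στ
    rw [Fintype.prod_sum_type]
    congr 1
  rw [Finset.sum_congr rfl (fun στ _ => hterm στ)]
  rw [Fintype.sum_prod_type]
  rw [Matrix.permanent, Matrix.permanent]
  exact (Finset.sum_mul_sum Finset.univ Finset.univ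
    (fun σ : Equiv.Perm (Fin m) => ∏ i, A (σ i) i)
    (fun σ : Equiv.Perm (Fin m) => ∏ i, D (σ i) i)).symm

lemma permanent_J (m : ℕ) : (Matrix.of (fun _ _ : Fin m => (1:ℤ))).permanent = (m ! : ℤ) := by
  rw [Matrix.permanent]
  have : ∀ σ : Equiv.Perm (Fin m), (∏ i, (Matrix.of (fun _ _ : Fin m => (1:ℤ))) (σ i) i) = 1 := by
    intro σ; simp
  rw [Finset.sum_congr rfl (fun σ _ => this σ), Finset.sum_const, Finset.card_univ]
  rw [Fintype.card_perm, Fintype.card_fin]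
  simp

lemma exists_B (m : ℕ) :
    ∃ B : Matrix (Fin (m+m)) (Fin (m+m)) ℤ, (∀ i j, B i j = 0 ∨ B i j = 1) ∧
      perm B * perm (Jmat (m+m) - B) = ((m ! : ℤ))^4 := by
  set e := finSumFinEquiv (m := m) (n := m) with he
  set J' : Matrix (Fin m) (Fin m) ℤ := Matrix.of fun _ _ => 1 with hJ'
  refine ⟨(Matrix.fromBlocks J' 0 0 J').submatrix e.symm e.symm, ?_, ?_⟩
  · intro i j
    rcases hx : e.symm i with a|a <;> rcases hy : e.symm j with b|b <;>
      simp [Matrix.submatrix_apply, hx, hy, hJ']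
  · have hJB : Jmat (m+m) - (Matrix.fromBlocks J' 0 0 J').submatrix e.symm e.symm
        = (Matrix.fromBlocks 0 J' J' 0).submatrix e.symm e.symm := by
      ext i j
      rcases hx : e.symm i with a|a <;> rcases hy : e.symm j with b|b <;>
        simp [Jmat, Matrix.sub_apply, Matrix.submatrix_apply, hx, hy, hJ']
    rw [hJB]
    rw [perm_eq_permanent, perm_eq_permanent, permanent_reindex, permanent_reindex]
    have hswap : (Matrix.fromBlocks 0 J' J' 0)
        = (Matrix.fromBlocks J' (0 : Matrix (Fin m) (Fin m) ℤ) 0 J').submatrix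
            (Equiv.sumComm (Fin m) (Fin m)) id := by
      ext i j
      rcases i with a|a <;> rcases j with b|b <;>
        simp [Matrix.submatrix_apply]
    rw [hswap, Matrix.permanent_permute_cols]
    rw [permanent_fromBlocks, permanent_J]
    ring

/-- For even `n > 0`, every `n×n` (0,1)-matrix `B` satisfies
`per(B)·per(Jₙ - B) ≤ ((n/2)!)⁴`, and this bound is attained; i.e. the maximal number of
directed 2-factors of a bipartite tournament obtained by orienting `K_{n,n}` is `((n/2)!)⁴`. -/
theorem stmt_11 (n : ℕ) (hn : 0 < n) (hne : Even n) :
    (∀ B : Matrix (Fin n) (Fin n) ℤ, (∀ i j, B i j = 0 ∨ B i j = 1) →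
      perm B * perm (Jmat n - B) ≤ ((n / 2)! : ℤ) ^ 4) ∧
    (∃ B : Matrix (Fin n) (Fin n) ℤ, (∀ i j, B i j = 0 ∨ B i j = 1) ∧
      perm B * perm (Jmat n - B) = ((n / 2)! : ℤ) ^ 4) := by
  obtain ⟨m, rfl⟩ := hne
  have hm : 0 < m := by omega
  have hdiv : (m + m) / 2 = m := by omega
  rw [hdiv]
  exact ⟨fun B hB => upper_bound hm B hB, exists_B m⟩
end

section
/- Let p ≥ 1 be an integer, set n = 2p + 1, and let B be the n×n (0,1)-matrix B = J_p ⊕ J_p ⊕ J_1 (block-diagonal with two p×p all-ones blocks and a 1×1 all-ones block). Then per(B) · per(J_n − B) = 2p · (p!)⁴. -/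
open Nat Matrix

namespace Stmt13

open Equiv

variable {α : Type*} [Fintype α] [DecidableEq α]

def partEquiv (q : α → Prop) [DecidablePred q] (Ψ : α → Prop) (c : α) (hc : ¬ q c) :
    {σ : Perm α // (∀ a, q (σ a) ↔ q a) ∧ Ψ (σ c)} ≃
      Perm {a // q a} × {g : Perm {a // ¬ q a} // Ψ ((g ⟨c, hc⟩ : {a // ¬ q a}) : α)} where
  toFun σ := ⟨σ.1.subtypePerm fun a => σ.2.1 a,
    ⟨σ.1.subtypePerm fun a => not_congr (σ.2.1 a), σ.2.2⟩⟩
  invFun τg := ⟨Equiv.Perm.subtypeCongr τg.1 τg.2.1, by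
    constructor
    · intro a
      by_cases h : q a
      · rw [Equiv.Perm.subtypeCongr.left_apply _ _ h]
        simp [h, (τg.1 ⟨a, h⟩).2]
      · rw [Equiv.Perm.subtypeCongr.right_apply _ _ h]
        simp [h, (τg.2.1 ⟨a, h⟩).2]
    · rw [Equiv.Perm.subtypeCongr.right_apply _ _ hc]
      exact τg.2.2⟩
  left_inv σ := by
    apply Subtype.ext
    apply Equiv.ext
    intro a
    by_cases h : q a
    · rw [Equiv.Perm.subtypeCongr.left_apply _ _ h]
      rfl
    · rw [Equiv.Perm.subtypeCongr.right_apply _ _ h]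
      rfl
  right_inv τg := by
    refine Prod.ext ?_ (Subtype.ext ?_)
    · apply Equiv.ext
      rintro ⟨a, ha⟩
      apply Subtype.ext
      simp [Equiv.Perm.subtypePerm_apply, Equiv.Perm.subtypeCongr.left_apply _ _ ha]
    · apply Equiv.ext
      rintro ⟨a, ha⟩
      apply Subtype.ext
      simp [Equiv.Perm.subtypePerm_apply, Equiv.Perm.subtypeCongr.right_apply _ _ ha]

lemma card_part (q : α → Prop) [DecidablePred q] (Ψ : α → Prop) [DecidablePred Ψ]
    (c : α) (hc : ¬ q c) :
    Fintype.card {σ : Perm α // (∀ a, q (σ a) ↔ q a) ∧ Ψ (σ c)} =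
      (Fintype.card {a // q a})! *
        Fintype.card {g : Perm {a // ¬ q a} // Ψ ((g ⟨c, hc⟩ : {a // ¬ q a}) : α)} := by
  rw [Fintype.card_congr (partEquiv q Ψ c hc), Fintype.card_prod, Fintype.card_perm]

lemma card_fix (b : α) :
    Fintype.card {g : Perm α // g b = b} = (Fintype.card α - 1)! := by
  have e1 : {g : Perm α // g b = b} ≃
      {g : Perm α // (∀ a, (g a ≠ b ↔ a ≠ b)) ∧ (fun _ : α => True) (g b)} := by
    refine Equiv.subtypeEquivRight fun g => ?_
    constructor
    · intro h
      refine ⟨fun a => not_congr ⟨fun ha => ?_, fun ha => ha ▸ h⟩, trivial⟩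
      rw [← h] at ha; exact g.injective ha
    · rintro ⟨h, -⟩
      exact not_not.mp (fun hgb => ((h b).mp hgb) rfl)
  rw [Fintype.card_congr e1, card_part (fun a => a ≠ b) (fun _ => True) b (not_not.mpr rfl)]
  have e2 : {g : Perm {a : α // ¬ a ≠ b} // True} ≃ Perm {a : α // a = b} := by
    refine (Equiv.subtypeUnivEquiv fun _ => trivial).trans ?_
    exact Equiv.permCongr (Equiv.subtypeEquivRight fun a => not_not)
  have h1 : Fintype.card {a : α // a ≠ b} = Fintype.card α - 1 := by
    have := Fintype.card_subtype_compl (fun a : α => a = b)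
    simpa [Fintype.card_subtype_eq] using this
  rw [h1, Fintype.card_congr e2, Fintype.card_perm, Fintype.card_subtype_eq]
  simp

lemma card_nonfix (b : α) :
    Fintype.card {g : Perm α // g b ≠ b} =
      (Fintype.card α)! - (Fintype.card α - 1)! := by
  have := Fintype.card_subtype_compl (fun g : Perm α => g b = b)
  rw [Fintype.card_perm, card_fix b] at this
  exact this

/-! ### indicator matrices -/

lemma perm_ind {n : ℕ} (P : Fin n → Fin n → Prop) [∀ i j, Decidable (P i j)] :
    perm (Matrix.of fun i j => if P i j then (1 : ℤ) else 0) =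
      Fintype.card {σ : Perm (Fin n) // ∀ i, P i (σ i)} := by
  unfold perm
  have h1 : ∀ σ : Perm (Fin n),
      (∏ i, (Matrix.of fun i j => if P i j then (1 : ℤ) else 0) i (σ i)) =
        if ∀ i, P i (σ i) then 1 else 0 := by
    intro σ
    simp only [Matrix.of_apply]
    rw [Finset.prod_boole]
    simp
  rw [Finset.sum_congr rfl fun σ _ => h1 σ, Finset.sum_boole, Fintype.card_subtype]

/-! ### The specific setting -/

variable (p : ℕ)

def Pred (i j : Fin (2 * p + 1)) : Prop :=
  ((i : ℕ) < p ∧ (j : ℕ) < p) ∨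
    (p ≤ (i : ℕ) ∧ (i : ℕ) < 2 * p ∧ p ≤ (j : ℕ) ∧ (j : ℕ) < 2 * p) ∨
    ((i : ℕ) = 2 * p ∧ (j : ℕ) = 2 * p)

instance (i j : Fin (2 * p + 1)) : Decidable (Pred p i j) := by
  unfold Pred; infer_instance

def c : Fin (2 * p + 1) := ⟨2 * p, by omega⟩

lemma c_val : ((c p : Fin (2 * p + 1)) : ℕ) = 2 * p := rfl

lemma hcA : ¬ ((c p : Fin (2 * p + 1)) : ℕ) < p := by rw [c_val]; omega

lemma hcB : ¬ (p ≤ ((c p : Fin (2 * p + 1)) : ℕ) ∧ ((c p : Fin (2 * p + 1)) : ℕ) < 2 * p) := by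
  rw [c_val]; omega

/-- card of the lower block -/
lemma cardA : Fintype.card {a : Fin (2 * p + 1) // (a : ℕ) < p} = p := by
  have e : {a : Fin (2 * p + 1) // (a : ℕ) < p} ≃ Fin p :=
    { toFun := fun a => ⟨a.1.1, a.2⟩
      invFun := fun j => ⟨⟨j.1, by omega⟩, j.2⟩
      left_inv := fun a => by apply Subtype.ext; apply Fin.ext; rfl
      right_inv := fun j => rfl }
  rw [Fintype.card_congr e, Fintype.card_fin]

lemma cardAc : Fintype.card {a : Fin (2 * p + 1) // ¬ (a : ℕ) < p} = p + 1 := by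
  have e : {a : Fin (2 * p + 1) // ¬ (a : ℕ) < p} ≃ Fin (p + 1) :=
    { toFun := fun a => ⟨a.1.1 - p, by have h1 := a.1.2; have h2 := a.2; omega⟩
      invFun := fun j => ⟨⟨j.1 + p, by have := j.2; omega⟩, by have := j.2; dsimp only; omega⟩
      left_inv := fun a => by
        apply Subtype.ext; apply Fin.ext
        have h2 := a.2; dsimp only; omega
      right_inv := fun j => by apply Fin.ext; dsimp only; omega }
  rw [Fintype.card_congr e, Fintype.card_fin]

lemma cardB : Fintype.card {a : Fin (2 * p + 1) // p ≤ (a : ℕ) ∧ (a : ℕ) < 2 * p} = p := by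
  have e : {a : Fin (2 * p + 1) // p ≤ (a : ℕ) ∧ (a : ℕ) < 2 * p} ≃ Fin p :=
    { toFun := fun a => ⟨a.1.1 - p, by have := a.2; omega⟩
      invFun := fun j => ⟨⟨j.1 + p, by have := j.2; omega⟩, by have := j.2; dsimp only; omega⟩
      left_inv := fun a => by
        apply Subtype.ext; apply Fin.ext
        have := a.2; dsimp only; omega
      right_inv := fun j => by apply Fin.ext; dsimp only; omega }
  rw [Fintype.card_congr e, Fintype.card_fin]

lemma cardBc :
    Fintype.card {a : Fin (2 * p + 1) // ¬ (p ≤ (a : ℕ) ∧ (a : ℕ) < 2 * p)} = p + 1 := by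
  have e : {a : Fin (2 * p + 1) // ¬ (p ≤ (a : ℕ) ∧ (a : ℕ) < 2 * p)} ≃ Fin (p + 1) :=
    { toFun := fun a => ⟨min a.1.1 p, by omega⟩
      invFun := fun j => if h : j.1 < p then ⟨⟨j.1, by omega⟩, by dsimp only; omega⟩
        else ⟨⟨2 * p, by omega⟩, by dsimp only; omega⟩
      left_inv := fun a => by
        have h1 := a.1.2; have h2 := a.2
        by_cases h : a.1.1 < p
        · dsimp only; rw [dif_pos (by omega)]
          apply Subtype.ext; apply Fin.ext; dsimp only; omega
        · dsimp only; rw [dif_neg (by omega)]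
          apply Subtype.ext; apply Fin.ext; dsimp only; omega
      right_inv := fun j => by
        have hj := j.2
        by_cases h : j.1 < p
        · dsimp only; rw [dif_pos h]; apply Fin.ext; dsimp only; omega
        · dsimp only; rw [dif_neg h]; apply Fin.ext; dsimp only; omega }
  rw [Fintype.card_congr e, Fintype.card_fin]


/-! ### key injectivity lemmas -/

lemma keyA (σ : Perm (Fin (2 * p + 1))) (hσ : ∀ i, ¬ Pred p i (σ i))
    (hc : ((σ (c p)) : ℕ) < p) {i : Fin (2 * p + 1)} (hi : (i : ℕ) < p) :
    ((σ i) : ℕ) ≠ 2 * p := by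
  intro hival
  have hbA : ∀ j : Fin p, p + j.1 < 2 * p + 1 := fun j => by have := j.2; omega
  have hg : ∀ j : Fin p, ((σ.symm ⟨p + j.1, hbA j⟩ : Fin (2 * p + 1)) : ℕ) < p := by
    intro j
    set b : Fin (2 * p + 1) := ⟨p + j.1, hbA j⟩ with hbdef
    set a := σ.symm b with hadef
    have hs : σ a = b := σ.apply_symm_apply b
    have h1 := hσ a
    unfold Pred at h1
    rw [hs] at h1
    have hbv : (b : ℕ) = p + j.1 := rfl
    have h2 : (a : ℕ) ≠ 2 * p := by
      intro h2v
      have he : a = c p := Fin.ext (h2v.trans (c_val p).symm)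
      rw [he] at hs
      rw [hs] at hc
      omega
    have h3 := a.isLt
    omega
  let g : Fin p → Fin p := fun j => ⟨(σ.symm ⟨p + j.1, hbA j⟩ : Fin (2 * p + 1)).1, hg j⟩
  have ginj : Function.Injective g := by
    intro j j' hjj
    have h0 := congrArg Fin.val hjj
    have hv : ((σ.symm ⟨p + j.1, hbA j⟩ : Fin (2 * p + 1)) : ℕ)
        = ((σ.symm ⟨p + j'.1, hbA j'⟩ : Fin (2 * p + 1)) : ℕ) := by exact h0
    have h1 : (σ.symm ⟨p + j.1, hbA j⟩ : Fin (2 * p + 1)) = σ.symm ⟨p + j'.1, hbA j'⟩ :=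
      Fin.ext hv
    have h2 := σ.symm.injective h1
    simp only [Fin.mk.injEq] at h2
    exact Fin.ext (by omega)
  obtain ⟨j, hj⟩ := Finite.injective_iff_surjective.mp ginj ⟨i.1, hi⟩
  have h0 := congrArg Fin.val hj
  have hv : ((σ.symm ⟨p + j.1, hbA j⟩ : Fin (2 * p + 1)) : ℕ) = (i : ℕ) := by exact h0
  have h4 : (σ.symm ⟨p + j.1, hbA j⟩ : Fin (2 * p + 1)) = i := Fin.ext hv
  have h5 := congrArg σ h4
  rw [Equiv.apply_symm_apply] at h5
  have h6 : p + j.1 = ((σ i) : ℕ) := congrArg Fin.val h5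
  have := j.2
  omega

lemma keyB (σ : Perm (Fin (2 * p + 1))) (hσ : ∀ i, ¬ Pred p i (σ i))
    (hc : ¬ ((σ (c p)) : ℕ) < p) {i : Fin (2 * p + 1)} (hi1 : p ≤ (i : ℕ)) (hi2 : (i : ℕ) < 2 * p) :
    ((σ i) : ℕ) ≠ 2 * p := by
  intro hival
  have hbB : ∀ j : Fin p, j.1 < 2 * p + 1 := fun j => by have := j.2; omega
  have hg : ∀ j : Fin p, p ≤ ((σ.symm ⟨j.1, hbB j⟩ : Fin (2 * p + 1)) : ℕ) ∧
      ((σ.symm ⟨j.1, hbB j⟩ : Fin (2 * p + 1)) : ℕ) < 2 * p := by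
    intro j
    set b : Fin (2 * p + 1) := ⟨j.1, hbB j⟩ with hbdef
    set a := σ.symm b with hadef
    have hs : σ a = b := σ.apply_symm_apply b
    have h1 := hσ a
    unfold Pred at h1
    rw [hs] at h1
    have hbv : (b : ℕ) = j.1 := rfl
    have hjp := j.2
    have h2 : (a : ℕ) ≠ 2 * p := by
      intro h2v
      have he : a = c p := Fin.ext (h2v.trans (c_val p).symm)
      rw [he] at hs
      rw [hs] at hc
      omega
    have h3 := a.isLt
    omega
  let g : Fin p → Fin p := fun j =>
    ⟨(σ.symm ⟨j.1, hbB j⟩ : Fin (2 * p + 1)).1 - p, by have := hg j; omega⟩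
  have ginj : Function.Injective g := by
    intro j j' hjj
    have h0 := congrArg Fin.val hjj
    have hb1 := hg j
    have hb2 := hg j'
    have hv : ((σ.symm ⟨j.1, hbB j⟩ : Fin (2 * p + 1)) : ℕ) - p
        = ((σ.symm ⟨j'.1, hbB j'⟩ : Fin (2 * p + 1)) : ℕ) - p := by exact h0
    have h1 : (σ.symm ⟨j.1, hbB j⟩ : Fin (2 * p + 1)) = σ.symm ⟨j'.1, hbB j'⟩ :=
      Fin.ext (by omega)
    have h2 := σ.symm.injective h1
    simp only [Fin.mk.injEq] at h2
    exact Fin.ext h2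
  obtain ⟨j, hj⟩ := Finite.injective_iff_surjective.mp ginj ⟨i.1 - p, by omega⟩
  have hb1 := hg j
  have h0 := congrArg Fin.val hj
  have hv : ((σ.symm ⟨j.1, hbB j⟩ : Fin (2 * p + 1)) : ℕ) - p = (i : ℕ) - p := by exact h0
  have h4 : (σ.symm ⟨j.1, hbB j⟩ : Fin (2 * p + 1)) = i := Fin.ext (by omega)
  have h5 := congrArg σ h4
  rw [Equiv.apply_symm_apply] at h5
  have h6 : j.1 = ((σ i) : ℕ) := congrArg Fin.val h5
  have := j.2
  omega

/-! ### the block swap involution -/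

def wf : Fin (2 * p + 1) → Fin (2 * p + 1) := fun a =>
  ⟨if a.1 < p then a.1 + p else if a.1 < 2 * p then a.1 - p else a.1,
    by have := a.isLt; split_ifs <;> omega⟩

lemma wf_val (a : Fin (2 * p + 1)) :
    (wf p a).1 = if a.1 < p then a.1 + p else if a.1 < 2 * p then a.1 - p else a.1 := rfl

lemma wf_inv : Function.Involutive (wf p) := by
  intro a
  apply Fin.ext
  simp only [wf_val]
  have := a.isLt
  split_ifs <;> omega

def w : Perm (Fin (2 * p + 1)) := Function.Involutive.toPerm (wf p) (wf_inv p)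

lemma w_apply (a : Fin (2 * p + 1)) : w p a = wf p a := rfl

lemma ww (τ : Perm (Fin (2 * p + 1))) : (τ.trans (w p)).trans (w p) = τ := by
  apply Equiv.ext
  intro a
  simp only [Equiv.trans_apply, w_apply]
  exact wf_inv p (τ a)

/-! ### transfer lemmas -/

lemma toX1 (σ : Perm (Fin (2 * p + 1))) (hσ : ∀ i, ¬ Pred p i (σ i))
    (h : ((σ (c p)) : ℕ) < p) :
    (∀ a, (((σ.trans (w p)) a : ℕ) < p ↔ (a : ℕ) < p)) ∧ (σ.trans (w p)) (c p) ≠ c p := by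
  have hcv := c_val p
  constructor
  · intro a
    have hσa := hσ a
    unfold Pred at hσa
    have hla := a.isLt
    have hlsa := (σ a).isLt
    simp only [Equiv.trans_apply, w_apply, wf_val]
    by_cases ha : (a : ℕ) < p
    · have hne := keyA p σ hσ h ha
      split_ifs <;> omega
    · by_cases ha2 : (a : ℕ) = 2 * p
      · have he : a = c p := Fin.ext (ha2.trans (c_val p).symm)
        rw [he]
        split_ifs <;> omega
      · split_ifs <;> omega
  · intro heq
    have hv := congrArg Fin.val heq
    simp only [Equiv.trans_apply, w_apply, wf_val, c_val] at hv
    split_ifs at hv <;> omega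

lemma fromX1 (τ : Perm (Fin (2 * p + 1)))
    (hτ : (∀ a, ((τ a : ℕ) < p ↔ (a : ℕ) < p)) ∧ τ (c p) ≠ c p) :
    (∀ i, ¬ Pred p i ((τ.trans (w p)) i)) ∧ (((τ.trans (w p)) (c p)) : ℕ) < p := by
  obtain ⟨hq, hcc⟩ := hτ
  have hcv := c_val p
  have hτc : ((τ (c p)) : ℕ) ≠ 2 * p := fun hh => hcc (Fin.ext (hh.trans (c_val p).symm))
  have hτc2 := hq (c p)
  have hlc := (τ (c p)).isLt
  constructor
  · intro i
    have hqi := hq i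
    have hli := i.isLt
    have hlti := (τ i).isLt
    unfold Pred
    simp only [Equiv.trans_apply, w_apply, wf_val]
    by_cases hi2 : (i : ℕ) = 2 * p
    · have he : i = c p := Fin.ext (hi2.trans (c_val p).symm)
      rw [he]
      split_ifs <;> omega
    · split_ifs <;> omega
  · simp only [Equiv.trans_apply, w_apply, wf_val]
    split_ifs <;> omega

lemma toX2 (σ : Perm (Fin (2 * p + 1))) (hσ : ∀ i, ¬ Pred p i (σ i))
    (h : ¬ ((σ (c p)) : ℕ) < p) :
    (∀ a, ((p ≤ ((σ.trans (w p)) a : ℕ) ∧ ((σ.trans (w p)) a : ℕ) < 2 * p) ↔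
      (p ≤ (a : ℕ) ∧ (a : ℕ) < 2 * p))) ∧ (σ.trans (w p)) (c p) ≠ c p := by
  have hcv := c_val p
  have hσc := hσ (c p)
  unfold Pred at hσc
  have hlc := (σ (c p)).isLt
  constructor
  · intro a
    have hσa := hσ a
    unfold Pred at hσa
    have hla := a.isLt
    have hlsa := (σ a).isLt
    simp only [Equiv.trans_apply, w_apply, wf_val]
    by_cases ha : p ≤ (a : ℕ) ∧ (a : ℕ) < 2 * p
    · have hne := keyB p σ hσ h ha.1 ha.2
      split_ifs <;> omega
    · by_cases ha2 : (a : ℕ) = 2 * p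
      · have he : a = c p := Fin.ext (ha2.trans (c_val p).symm)
        rw [he]
        split_ifs <;> omega
      · split_ifs <;> omega
  · intro heq
    have hv := congrArg Fin.val heq
    simp only [Equiv.trans_apply, w_apply, wf_val, c_val] at hv
    split_ifs at hv <;> omega

lemma fromX2 (τ : Perm (Fin (2 * p + 1)))
    (hτ : (∀ a, ((p ≤ (τ a : ℕ) ∧ (τ a : ℕ) < 2 * p) ↔ (p ≤ (a : ℕ) ∧ (a : ℕ) < 2 * p))) ∧
      τ (c p) ≠ c p) :
    (∀ i, ¬ Pred p i ((τ.trans (w p)) i)) ∧ ¬ (((τ.trans (w p)) (c p)) : ℕ) < p := by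
  obtain ⟨hq, hcc⟩ := hτ
  have hcv := c_val p
  have hτc : ((τ (c p)) : ℕ) ≠ 2 * p := fun hh => hcc (Fin.ext (hh.trans (c_val p).symm))
  have hτc2 := hq (c p)
  have hlc := (τ (c p)).isLt
  constructor
  · intro i
    have hqi := hq i
    have hli := i.isLt
    have hlti := (τ i).isLt
    unfold Pred
    simp only [Equiv.trans_apply, w_apply, wf_val]
    by_cases hi2 : (i : ℕ) = 2 * p
    · have he : i = c p := Fin.ext (hi2.trans (c_val p).symm)
      rw [he]
      split_ifs <;> omega
    · split_ifs <;> omega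
  · simp only [Equiv.trans_apply, w_apply, wf_val]
    split_ifs <;> omega

/-! ### the main equivalence for the complement count -/

def TEquiv : {σ : Perm (Fin (2 * p + 1)) // ∀ i, ¬ Pred p i (σ i)} ≃
    ({σ : Perm (Fin (2 * p + 1)) //
        (∀ a, ((σ a : ℕ) < p ↔ (a : ℕ) < p)) ∧ σ (c p) ≠ c p} ⊕
      {σ : Perm (Fin (2 * p + 1)) //
        (∀ a, ((p ≤ (σ a : ℕ) ∧ (σ a : ℕ) < 2 * p) ↔ (p ≤ (a : ℕ) ∧ (a : ℕ) < 2 * p))) ∧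
          σ (c p) ≠ c p}) where
  toFun σ := if h : ((σ.1 (c p)) : ℕ) < p
    then Sum.inl ⟨σ.1.trans (w p), toX1 p σ.1 σ.2 h⟩
    else Sum.inr ⟨σ.1.trans (w p), toX2 p σ.1 σ.2 h⟩
  invFun x := match x with
    | Sum.inl τ => ⟨τ.1.trans (w p), (fromX1 p τ.1 τ.2).1⟩
    | Sum.inr τ => ⟨τ.1.trans (w p), (fromX2 p τ.1 τ.2).1⟩
  left_inv σ := by
    dsimp only
    by_cases h : ((σ.1 (c p)) : ℕ) < p
    · rw [dif_pos h]
      exact Subtype.ext (ww p σ.1)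
    · rw [dif_neg h]
      exact Subtype.ext (ww p σ.1)
  right_inv x := by
    rcases x with τ | τ
    · have h2 := (fromX1 p τ.1 τ.2).2
      dsimp only
      rw [dif_pos h2]
      exact congrArg Sum.inl (Subtype.ext (ww p τ.1))
    · have h2 := (fromX2 p τ.1 τ.2).2
      dsimp only
      rw [dif_neg h2]
      exact congrArg Sum.inr (Subtype.ext (ww p τ.1))

/-! ### cardinalities -/

lemma fact_aux : (p + 1)! - (p + 1 - 1)! = p * p ! := by
  have h : (p + 1)! = p * p ! + p ! := by
    rw [Nat.factorial_succ]; ring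
  simp only [Nat.add_sub_cancel]
  omega

set_option maxHeartbeats 1600000 in
lemma cardX1 : Fintype.card {σ : Perm (Fin (2 * p + 1)) //
    (∀ a, ((σ a : ℕ) < p ↔ (a : ℕ) < p)) ∧ σ (c p) ≠ c p} = p ! * (p * p !) := by
  have h := card_part (α := Fin (2 * p + 1)) (fun a => (a : ℕ) < p)
    (fun x => x ≠ c p) (c p) (hcA p)
  have e : {g : Perm {a : Fin (2 * p + 1) // ¬ (a : ℕ) < p} //
      ((g ⟨c p, hcA p⟩ : {a : Fin (2 * p + 1) // ¬ (a : ℕ) < p}) : Fin (2 * p + 1)) ≠ c p}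
      ≃ {g : Perm {a : Fin (2 * p + 1) // ¬ (a : ℕ) < p} // g ⟨c p, hcA p⟩ ≠ ⟨c p, hcA p⟩} :=
    Equiv.subtypeEquivRight fun g =>
      not_congr ⟨fun hh => Subtype.ext hh, fun hh => congrArg Subtype.val hh⟩
  rw [Fintype.card_congr e, card_nonfix, cardA, cardAc] at h
  rw [fact_aux] at h
  convert h using 2

set_option maxHeartbeats 1600000 in
lemma cardX2 : Fintype.card {σ : Perm (Fin (2 * p + 1)) //
    (∀ a, ((p ≤ (σ a : ℕ) ∧ (σ a : ℕ) < 2 * p) ↔ (p ≤ (a : ℕ) ∧ (a : ℕ) < 2 * p))) ∧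
      σ (c p) ≠ c p} = p ! * (p * p !) := by
  have h := card_part (α := Fin (2 * p + 1)) (fun a => p ≤ (a : ℕ) ∧ (a : ℕ) < 2 * p)
    (fun x => x ≠ c p) (c p) (hcB p)
  have e : {g : Perm {a : Fin (2 * p + 1) // ¬ (p ≤ (a : ℕ) ∧ (a : ℕ) < 2 * p)} //
      ((g ⟨c p, hcB p⟩ : {a : Fin (2 * p + 1) // ¬ (p ≤ (a : ℕ) ∧ (a : ℕ) < 2 * p)}) :
        Fin (2 * p + 1)) ≠ c p}
      ≃ {g : Perm {a : Fin (2 * p + 1) // ¬ (p ≤ (a : ℕ) ∧ (a : ℕ) < 2 * p)} //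
        g ⟨c p, hcB p⟩ ≠ ⟨c p, hcB p⟩} :=
    Equiv.subtypeEquivRight fun g =>
      not_congr ⟨fun hh => Subtype.ext hh, fun hh => congrArg Subtype.val hh⟩
  rw [Fintype.card_congr e, card_nonfix, cardB, cardBc] at h
  rw [fact_aux] at h
  convert h using 2

set_option maxHeartbeats 1600000 in
lemma cardT : Fintype.card {σ : Perm (Fin (2 * p + 1)) // ∀ i, ¬ Pred p i (σ i)} =
    2 * (p ! * (p * p !)) := by
  rw [Fintype.card_congr (TEquiv p), Fintype.card_sum]
  have h1 := cardX1 p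
  have h2 := cardX2 p
  omega

set_option maxHeartbeats 1600000 in
lemma cardS : Fintype.card {σ : Perm (Fin (2 * p + 1)) // ∀ i, Pred p i (σ i)} =
    p ! * p ! := by
  have e0 : {σ : Perm (Fin (2 * p + 1)) // ∀ i, Pred p i (σ i)} ≃
      {σ : Perm (Fin (2 * p + 1)) //
        (∀ a, ((σ a : ℕ) < p ↔ (a : ℕ) < p)) ∧ σ (c p) = c p} := by
    refine Equiv.subtypeEquivRight fun σ => ?_
    have hcv := c_val p
    constructor
    · intro h
      have h1 := h (c p)
      unfold Pred at h1
      have hcc : σ (c p) = c p := Fin.ext (by omega)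
      refine ⟨fun a => ?_, hcc⟩
      by_cases ha2 : (a : ℕ) = 2 * p
      · have he : a = c p := Fin.ext (ha2.trans (c_val p).symm)
        rw [he, hcc]
      · have h2 := h a
        unfold Pred at h2
        have := a.isLt
        omega
    · rintro ⟨hq, hcfix⟩ i
      unfold Pred
      have hi := i.isLt
      have hqi := hq i
      by_cases h2 : (i : ℕ) = 2 * p
      · have he : i = c p := Fin.ext (h2.trans (c_val p).symm)
        rw [he, hcfix]
        right; right; exact ⟨c_val p, c_val p⟩
      · have hne : ((σ i) : ℕ) ≠ 2 * p := by
          intro hval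
          have h3 : σ i = σ (c p) := by rw [hcfix]; exact Fin.ext (hval.trans (c_val p).symm)
          have h4 := σ.injective h3
          exact h2 ((congrArg Fin.val h4).trans (c_val p))
        have hlt := (σ i).isLt
        omega
  have h := card_part (α := Fin (2 * p + 1)) (fun a => (a : ℕ) < p)
    (fun x => x = c p) (c p) (hcA p)
  have e : {g : Perm {a : Fin (2 * p + 1) // ¬ (a : ℕ) < p} //
      ((g ⟨c p, hcA p⟩ : {a : Fin (2 * p + 1) // ¬ (a : ℕ) < p}) : Fin (2 * p + 1)) = c p}
      ≃ {g : Perm {a : Fin (2 * p + 1) // ¬ (a : ℕ) < p} // g ⟨c p, hcA p⟩ = ⟨c p, hcA p⟩} :=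
    Equiv.subtypeEquivRight fun g =>
      ⟨fun hh => Subtype.ext hh, fun hh => congrArg Subtype.val hh⟩
  rw [Fintype.card_congr e, card_fix, cardA, cardAc] at h
  simp only [Nat.add_sub_cancel] at h
  rw [Fintype.card_congr e0]
  convert h using 2

end Stmt13

set_option maxHeartbeats 1600000 in
/-- For `p ≥ 1`, `n = 2p+1` and `B = J_p ⊕ J_p ⊕ J_1` (block diagonal), one has
`per(B)·per(Jₙ - B) = 2p·(p!)⁴`. -/
theorem stmt_13 (p : ℕ) (hp : 1 ≤ p) (B : Matrix (Fin (2 * p + 1)) (Fin (2 * p + 1)) ℤ)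
    (hB : B = Matrix.of (fun i j : Fin (2 * p + 1) =>
      if ((i : ℕ) < p ∧ (j : ℕ) < p) ∨
          (p ≤ (i : ℕ) ∧ (i : ℕ) < 2 * p ∧ p ≤ (j : ℕ) ∧ (j : ℕ) < 2 * p) ∨
          ((i : ℕ) = 2 * p ∧ (j : ℕ) = 2 * p) then (1 : ℤ) else 0)) :
    perm B * perm (Jmat (2 * p + 1) - B) = 2 * p * (p ! : ℤ) ^ 4 := by
  have hPB : B = Matrix.of (fun i j => if Stmt13.Pred p i j then (1 : ℤ) else 0) := by
    rw [hB]
    ext i j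
    simp only [Matrix.of_apply, Stmt13.Pred]
  have hJB : Jmat (2 * p + 1) - B = Matrix.of (fun i j =>
      if ¬ Stmt13.Pred p i j then (1 : ℤ) else 0) := by
    rw [hPB]
    ext i j
    simp only [Matrix.sub_apply, Matrix.of_apply, Jmat]
    by_cases h : Stmt13.Pred p i j <;> simp [h]
  rw [hJB, hPB, Stmt13.perm_ind, Stmt13.perm_ind, Stmt13.cardS, Stmt13.cardT]
  push_cast
  ring
end

section
/- Let n > 1 be an odd integer and let B be any n×n matrix all of whose entries are 0 or 1. Then per(B) · per(J_n − B) ≤ (((n−1)/2)!)^{2n/(n−1)} · (((n+1)/2)!)^{2n/(n+1)}, where J_n is the n×n all-ones matrix. -/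
open Nat Matrix

open Finset Real

noncomputable def phi (r : ℕ) : ℝ := Real.log r.factorial / r

lemma phi_zero : phi 0 = 0 := by simp [phi]

lemma mul_phi (r : ℕ) : (r : ℝ) * phi r = Real.log r.factorial := by
  rcases Nat.eq_zero_or_pos r with h | h
  · simp [h, phi]
  · have : (r:ℝ) ≠ 0 := by positivity
    unfold phi; field_simp

lemma phi_nonneg (r : ℕ) : 0 ≤ phi r := by
  unfold phi
  apply div_nonneg _ (by positivity)
  apply Real.log_nonneg
  exact_mod_cast Nat.one_le_iff_ne_zero.mpr (Nat.factorial_ne_zero r)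

/-- Jensen: `T log T ≤ T log |s| + ∑ t log t` for nonnegative `t`. -/
lemma jensen_mul_log {α : Type*} (s : Finset α) (t : α → ℝ) (ht : ∀ a ∈ s, 0 ≤ t a) :
    (∑ a ∈ s, t a) * Real.log (∑ a ∈ s, t a) ≤
      (∑ a ∈ s, t a) * Real.log s.card + ∑ a ∈ s, t a * Real.log (t a) := by
  rcases s.eq_empty_or_nonempty with rfl | hs
  · simp
  have hcard : (0:ℝ) < s.card := by exact_mod_cast hs.card_pos
  set T := ∑ a ∈ s, t a with hT
  have hT0 : 0 ≤ T := Finset.sum_nonneg ht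
  rcases eq_or_lt_of_le hT0 with h0 | h0
  · have hz : ∀ a ∈ s, t a = 0 :=
      Finset.sum_eq_zero_iff_of_nonneg ht |>.mp h0.symm
    have : ∑ a ∈ s, t a * Real.log (t a) = 0 :=
      Finset.sum_eq_zero fun a ha => by rw [hz a ha]; ring
    rw [this, ← h0]; simp
  have hj := Real.convexOn_mul_log.map_sum_le (t := s) (w := fun _ => (s.card : ℝ)⁻¹)
      (p := t) (fun a _ => by positivity)
      (by rw [Finset.sum_const, nsmul_eq_mul]; exact mul_inv_cancel₀ hcard.ne') (fun a ha => ht a ha)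
  simp only [smul_eq_mul] at hj
  rw [← Finset.mul_sum, ← hT] at hj
  have hlog : Real.log ((s.card:ℝ)⁻¹ * T) = Real.log T - Real.log s.card := by
    rw [mul_comm, Real.log_mul (ne_of_gt h0) (by positivity), Real.log_inv]; ring
  rw [hlog] at hj
  have h2 := mul_le_mul_of_nonneg_left hj (le_of_lt hcard)
  calc T * Real.log T = (s.card:ℝ) * ((s.card:ℝ)⁻¹ * T * (Real.log T - Real.log s.card))
        + T * Real.log s.card := by field_simp; ring
    _ ≤ (s.card:ℝ) * ∑ a ∈ s, (s.card:ℝ)⁻¹ * (t a * Real.log (t a)) + T * Real.log s.card := by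
        linarith
    _ = (∑ a ∈ s, t a * Real.log (t a)) + T * Real.log s.card := by
        rw [← Finset.mul_sum]; field_simp
    _ = T * Real.log s.card + ∑ a ∈ s, t a * Real.log (t a) := by ring



lemma gauss_sum (k : ℕ) : ∑ j ∈ range k, ((j:ℝ)+1) = (k:ℝ)*((k:ℝ)+1)/2 := by
  induction k with
  | zero => simp
  | succ m ih => rw [Finset.sum_range_succ, ih]; push_cast; ring

lemma log_factorial (k : ℕ) : Real.log k.factorial = ∑ j ∈ range k, Real.log (j+1 : ℝ) := by
  rw [← Finset.prod_range_add_one_eq_factorial]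
  push_cast
  rw [Real.log_prod]
  intro j _
  positivity

/-- key estimate: `2 (k log(k+1) - log k!) ≥ k`. -/
lemma key_est (k : ℕ) : (k:ℝ) ≤ 2 * ((k:ℝ) * Real.log (k+1) - Real.log k.factorial) := by
  rw [log_factorial]
  have h1 : ∀ j ∈ range k, (1 : ℝ) - (j+1)/(k+1) ≤ Real.log (k+1) - Real.log (j+1 : ℝ) := by
    intro j hj
    have hj' : (j:ℝ) + 1 ≤ (k:ℝ) + 1 := by
      have := Finset.mem_range.mp hj
      have : (j:ℝ) < k := by exact_mod_cast this
      linarith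
    rw [← Real.log_div (by positivity) (by positivity)]
    have h := Real.one_sub_inv_le_log_of_pos (x := ((k:ℝ)+1)/((j:ℝ)+1)) (by positivity)
    have hinv : (((k:ℝ)+1)/((j:ℝ)+1))⁻¹ = ((j:ℝ)+1)/((k:ℝ)+1) := by rw [inv_div]
    rw [hinv] at h
    exact h
  have h2 := Finset.sum_le_sum h1
  have h3 : ∑ j ∈ range k, ((1:ℝ) - ((j:ℝ)+1)/((k:ℝ)+1)) = (k:ℝ)/2 := by
    rw [Finset.sum_sub_distrib, Finset.sum_const]
    rw [show ∑ j ∈ range k, ((j:ℝ)+1)/((k:ℝ)+1) = (∑ j ∈ range k, ((j:ℝ)+1)) / ((k:ℝ)+1) from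
      (Finset.sum_div _ _ _).symm, gauss_sum]
    have : (k:ℝ) + 1 ≠ 0 := by positivity
    field_simp
    rw [Finset.card_range]; ring
  have h4 : ∑ j ∈ range k, (Real.log ((k:ℝ)+1) - Real.log ((j:ℝ)+1)) =
      (k:ℝ) * Real.log ((k:ℝ)+1) - ∑ j ∈ range k, Real.log ((j:ℝ)+1) := by
    rw [Finset.sum_sub_distrib, Finset.sum_const]
    simp [nsmul_eq_mul]
  rw [h4, h3] at h2
  linarith

/-- discrete concavity step: `φ(k+2) - φ(k+1) ≤ φ(k+1) - φ(k)` for `k ≥ 1`. -/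
lemma phi_step (k : ℕ) (hk : 1 ≤ k) :
    phi (k+2) - phi (k+1) ≤ phi (k+1) - phi k := by
  have hK : (1:ℝ) ≤ (k:ℝ) := by exact_mod_cast hk
  set K := (k:ℝ) with hKdef
  have hK0 : 0 < K := by linarith
  have hL2 : Real.log (k+2).factorial = Real.log k.factorial + Real.log (K+1) + Real.log (K+2) := by
    have h : ((k+2).factorial : ℝ) = ((k:ℝ)+2) * (((k:ℝ)+1) * k.factorial) := by
      rw [show k+2 = (k+1)+1 from rfl, Nat.factorial_succ, Nat.factorial_succ]; push_cast; ring
    rw [h, Real.log_mul (by positivity) (by positivity),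
      Real.log_mul (by positivity) (by positivity)]
    ring
  have hL1 : Real.log (k+1).factorial = Real.log k.factorial + Real.log (K+1) := by
    have h : ((k+1).factorial : ℝ) = (K+1) * k.factorial := by
      rw [Nat.factorial_succ, hKdef]; push_cast; ring
    rw [h, Real.log_mul (by positivity) (by positivity)]; ring
  have hmain : K*(K+1)*Real.log (K+2) + 2*Real.log k.factorial ≤ K*(K+3)*Real.log (K+1) := by
    have hlog : Real.log (K+2) ≤ Real.log (K+1) + 1/(K+1) := by
      have h := Real.log_le_sub_one_of_pos (x := (K+2)/(K+1)) (by positivity)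
      rw [Real.log_div (by positivity) (by positivity)] at h
      have heq : (K+2)/(K+1) - 1 = 1/(K+1) := by
        field_simp; norm_num
      linarith
    have hkey := key_est k
    have h1 : K*(K+1)*Real.log (K+2) ≤ K*(K+1)*Real.log (K+1) + K := by
      have := mul_le_mul_of_nonneg_left hlog (show (0:ℝ) ≤ K*(K+1) by positivity)
      have he : K*(K+1)*(Real.log (K+1) + 1/(K+1)) = K*(K+1)*Real.log (K+1) + K := by
        field_simp
      linarith
    have hexp : K*(K+3)*Real.log (K+1) = K*(K+1)*Real.log (K+1) + 2*(K*Real.log (K+1)) := by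
      ring
    rw [hexp]
    have : (k:ℝ) * Real.log ((k:ℝ)+1) = K * Real.log (K+1) := rfl
    linarith [hkey]
  unfold phi
  have e2 : ((k+2:ℕ):ℝ) = K + 2 := by push_cast; ring
  have e1 : ((k+1:ℕ):ℝ) = K + 1 := by push_cast; ring
  rw [hL2, hL1, e2, e1, hKdef]
  rw [div_sub_div _ _ (by positivity) (by positivity),
    div_sub_div _ _ (by positivity) (ne_of_gt hK0),
    div_le_div_iff₀ (by positivity) (by positivity)]
  nlinarith [mul_le_mul_of_nonneg_left hmain (show (0:ℝ) ≤ K+1 by linarith)]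


lemma delta_anti (a b : ℕ) (ha : 1 ≤ a) (hab : a ≤ b) :
    phi (b+1) - phi b ≤ phi (a+1) - phi a := by
  induction b, hab using Nat.le_induction with
  | base => exact le_refl _
  | succ b hb ih =>
    have h := phi_step b (le_trans ha hb)
    linarith

lemma phi_pair_aux (m : ℕ) : ∀ d r : ℕ, 1 ≤ r → r + d = m →
    phi r + phi (2*m+1 - r) ≤ phi m + phi (m+1) := by
  intro d
  induction d with
  | zero =>
    intro r h1 h2
    have : r = m := by omega
    subst this
    have : 2*r+1-r = r+1 := by omega
    rw [this]
  | succ d ih =>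
    intro r h1 h2
    have hs : 2*m+1-r = (2*m-r)+1 := by omega
    have hs' : 2*m+1-(r+1) = 2*m-r := by omega
    have hd := delta_anti r (2*m-r) h1 (by omega)
    have step : phi r + phi (2*m+1-r) ≤ phi (r+1) + phi (2*m+1-(r+1)) := by
      rw [hs, hs']
      linarith
    exact le_trans step (ih (r+1) (by omega) (by omega))

lemma phi_pair (m r : ℕ) (hm : 1 ≤ m) (h1 : 1 ≤ r) (h2 : r ≤ 2*m) :
    phi r + phi (2*m+1 - r) ≤ phi m + phi (m+1) := by
  rcases le_or_gt r m with h | h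
  · exact phi_pair_aux m (m - r) r h1 (by omega)
  · have key := phi_pair_aux m (m - (2*m+1-r)) (2*m+1-r) (by omega) (by omega)
    have : 2*m+1-(2*m+1-r) = r := by omega
    rw [this] at key
    linarith

noncomputable def gfun (r : ℕ) : ℝ := (r.factorial : ℝ) ^ ((1:ℝ)/(r:ℝ))

lemma gfun_eq_exp (r : ℕ) : gfun r = Real.exp (phi r) := by
  unfold gfun phi
  rw [Real.rpow_def_of_pos (by positivity)]
  congr 1
  ring

lemma gfun_pos (r : ℕ) : 0 < gfun r := by rw [gfun_eq_exp]; exact Real.exp_pos _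

def goodSet {ι κ : Type} [DecidableEq ι] [Fintype ι] [DecidableEq κ] [Fintype κ]
    (R : ι → Finset κ) : Finset (ι ≃ κ) :=
  Finset.univ.filter (fun e => ∀ i, e i ∈ R i)

lemma mem_goodSet {ι κ : Type} [DecidableEq ι] [Fintype ι] [DecidableEq κ] [Fintype κ]
    {R : ι → Finset κ} {e : ι ≃ κ} : e ∈ goodSet R ↔ ∀ i, e i ∈ R i := by
  simp [goodSet]

lemma good_ne_iff {ι κ : Type} (e : ι ≃ κ) (i : ι) (k : κ) (hek : e i = k) :
    ∀ j, j ≠ i ↔ e j ≠ k := by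
  intro j
  constructor
  · intro hj h
    exact hj (e.injective (h.trans hek.symm))
  · intro h hj
    exact h (hj ▸ hek)

lemma fiber_card {ι κ : Type} [DecidableEq ι] [Fintype ι] [DecidableEq κ] [Fintype κ]
    (R : ι → Finset κ) (i : ι) (k : κ) (hk : k ∈ R i) :
    ((goodSet R).filter (fun e => e i = k)).card =
      (goodSet (fun j : {j // j ≠ i} => ((R j.1).erase k).subtype (fun c => c ≠ k))).card := by
  apply Finset.card_bij
    (i := fun e he => Equiv.subtypeEquiv e (good_ne_iff e i k (Finset.mem_filter.mp he).2))
  · -- maps to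
    intro e he
    rw [mem_goodSet]
    rintro ⟨j, hj⟩
    rw [Finset.mem_subtype]
    simp only [Equiv.subtypeEquiv_apply]
    rw [Finset.mem_erase]
    obtain ⟨hgood, hei⟩ := Finset.mem_filter.mp he
    refine ⟨(good_ne_iff e i k hei j).mp hj, ?_⟩
    exact (mem_goodSet.mp hgood) j
  · -- injective
    intro e₁ h₁ e₂ h₂ heq
    obtain ⟨_, he₁⟩ := Finset.mem_filter.mp h₁
    obtain ⟨_, he₂⟩ := Finset.mem_filter.mp h₂
    ext j
    by_cases hj : j = i
    · subst hj; rw [he₁, he₂]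
    · have := congrArg (fun E => ((E ⟨j, hj⟩ : {c // c ≠ k}) : κ)) heq
      simpa using this
  · -- surjective
    intro e' he'
    classical
    set E := (Equiv.optionSubtypeNe i).symm.trans (e'.optionCongr.trans (Equiv.optionSubtypeNe k))
      with hE
    have hval : ∀ (j : ι) (hj : j ≠ i),
        E j = (e' ⟨j, hj⟩ : κ) := by
      intro j hj
      simp [hE, Equiv.trans_apply, Equiv.optionSubtypeNe_symm_of_ne hj]
    have hvi : E i = k := by
      simp [hE, Equiv.trans_apply, Equiv.optionSubtypeNe_symm_self]
    refine ⟨E, ?_, ?_⟩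
    · refine Finset.mem_filter.mpr ⟨mem_goodSet.mpr ?_, hvi⟩
      intro j
      by_cases hj : j = i
      · subst hj; rw [hvi]; exact hk
      · rw [hval j hj]
        have := mem_goodSet.mp he' ⟨j, hj⟩
        rw [Finset.mem_subtype, Finset.mem_erase] at this
        exact this.2
    · ext ⟨j, hj⟩
      simp only [Equiv.subtypeEquiv_apply]
      exact hval j hj

theorem bregman (N : ℕ) : ∀ (ι κ : Type) [DecidableEq ι] [Fintype ι] [DecidableEq κ] [Fintype κ],
    Fintype.card ι = N → Fintype.card κ = N → ∀ R : ι → Finset κ,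
    ((goodSet R).card : ℝ) ≤ ∏ i, gfun (R i).card := by
  induction N with
  | zero =>
    intro ι κ _ _ _ _ hι hκ R
    haveI : IsEmpty ι := Fintype.card_eq_zero_iff.mp hι
    haveI : Subsingleton (ι ≃ κ) := ⟨fun a b => Equiv.ext fun x => isEmptyElim x⟩
    have h1 : (goodSet R).card ≤ 1 := by
      calc (goodSet R).card ≤ Fintype.card (ι ≃ κ) := Finset.card_le_univ _
        _ ≤ 1 := Fintype.card_le_one_iff_subsingleton.mpr inferInstance
    have h2 : ∏ i, gfun (R i).card = 1 := by
      rw [Finset.univ_eq_empty, Finset.prod_empty]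
    rw [h2]
    exact_mod_cast h1
  | succ M IH =>
    intro ι κ _ _ _ _ hι hκ R
    by_cases hp : (goodSet R).card = 0
    · rw [hp]
      push_cast
      exact Finset.prod_nonneg fun i _ => (gfun_pos _).le
    set p := (goodSet R).card with hpdef
    have hp1 : 1 ≤ p := Nat.one_le_iff_ne_zero.mpr hp
    have hppos : (0:ℝ) < p := by exact_mod_cast hp1
    obtain ⟨e₀, he₀⟩ := Finset.card_pos.mp (Nat.pos_of_ne_zero hp)
    have hmem : ∀ e ∈ goodSet R, ∀ i, e i ∈ R i := fun e he => mem_goodSet.mp he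
    have hRpos : ∀ i, 0 < (R i).card := fun i => Finset.card_pos.mpr ⟨e₀ i, hmem e₀ he₀ i⟩
    have hRle : ∀ i, (R i).card ≤ M + 1 := fun i => hκ ▸ (Finset.card_le_univ (R i))
    set c : ι → κ → ℕ := fun i k => ((goodSet R).filter (fun e => e i = k)).card with hc
    have F1 : ∀ i, ∑ k ∈ R i, c i k = p := fun i =>
      (Finset.card_eq_sum_card_fiberwise (fun e he => hmem e he i)).symm
    -- the key inductive bound on fibers
    have key : ∀ (i : ι) (k : κ), k ∈ R i →
        Real.log (c i k) ≤ ∑ j ∈ univ.erase i, phi ((R j).erase k).card := by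
      intro i k hk
      by_cases hcz : c i k = 0
      · rw [hcz]
        push_cast
        rw [Real.log_zero]
        exact Finset.sum_nonneg fun j _ => phi_nonneg _
      have hcpos : (0:ℝ) < c i k := by
        have := Nat.pos_of_ne_zero hcz; exact_mod_cast this
      have hι' : Fintype.card {j // j ≠ i} = M := by
        simp [Fintype.card_subtype_compl, hι]
      have hκ' : Fintype.card {c' // c' ≠ k} = M := by
        simp [Fintype.card_subtype_compl, hκ]
      have hIH := IH {j // j ≠ i} {c' // c' ≠ k} hι' hκ'
        (fun j => ((R j.1).erase k).subtype (fun c' => c' ≠ k))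
      rw [← fiber_card R i k hk] at hIH
      have hcards : ∀ j : {j // j ≠ i},
          (((R j.1).erase k).subtype (fun c' => c' ≠ k)).card = ((R j.1).erase k).card := by
        intro j
        rw [Finset.card_subtype]
        congr 1
        exact Finset.filter_true_of_mem fun x hx => (Finset.mem_erase.mp hx).1
      have hlog := Real.log_le_log hcpos hIH
      calc Real.log (c i k) ≤ Real.log (∏ j : {j // j ≠ i},
            gfun (((R j.1).erase k).subtype (fun c' => c' ≠ k)).card) := hlog
        _ = ∑ j : {j // j ≠ i}, phi ((R j.1).erase k).card := by
            rw [Real.log_prod (fun j _ => (gfun_pos _).ne')]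
            exact Finset.sum_congr rfl fun j _ => by rw [hcards j, gfun_eq_exp, Real.log_exp]
        _ = ∑ j ∈ univ.erase i, phi ((R j).erase k).card := by
            exact (Finset.sum_subtype (univ.erase i) (fun x => by simp)
              (fun j => phi ((R j).erase k).card)).symm
    -- Jensen step for each row i
    have step1 : ∀ i : ι, (p:ℝ) * Real.log p ≤
        (p:ℝ) * Real.log (R i).card + ∑ e ∈ goodSet R, Real.log (c i (e i)) := by
      intro i
      have hj := jensen_mul_log (R i) (fun k => (c i k : ℝ)) (fun k _ => by positivity)
      have hsum : ∑ k ∈ R i, (c i k : ℝ) = p := by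
        rw [← F1 i]; push_cast; rfl
      have hfib : ∑ e ∈ goodSet R, Real.log (c i (e i)) =
          ∑ k ∈ R i, (c i k : ℝ) * Real.log (c i k) := by
        rw [← Finset.sum_fiberwise_of_maps_to (fun e he => hmem e he i)
            (fun e => Real.log (c i (e i)))]
        refine Finset.sum_congr rfl fun k hk => ?_
        have hconst : ∀ e ∈ (goodSet R).filter (fun e => e i = k),
            Real.log (c i (e i)) = Real.log (c i k) := fun e he => by
          rw [(Finset.mem_filter.mp he).2]
        rw [Finset.sum_congr rfl hconst, Finset.sum_const, nsmul_eq_mul]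
      rw [hsum] at hj
      rw [hfib]
      exact hj
    -- pointwise bound for each good e
    have step2 : ∀ e ∈ goodSet R, ∑ i, Real.log (c i (e i)) ≤
        ∑ j, (Real.log ((R j).card - 1).factorial
          + (((M:ℝ)+1) - (R j).card) * phi (R j).card) := by
      intro e he
      have h1 : ∑ i, Real.log (c i (e i)) ≤
          ∑ i, ∑ j ∈ univ.erase i, phi ((R j).erase (e i)).card :=
        Finset.sum_le_sum fun i _ => key i (e i) (hmem e he i)
      have h2 : ∑ i, ∑ j ∈ univ.erase i, phi ((R j).erase (e i)).card
          = ∑ j, ∑ i ∈ univ.erase j, phi ((R j).erase (e i)).card := by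
        have l1 : ∀ i : ι, ∑ j ∈ univ.erase i, phi ((R j).erase (e i)).card
            = (∑ j, phi ((R j).erase (e i)).card) - phi ((R i).erase (e i)).card :=
          fun i => Finset.sum_erase_eq_sub (Finset.mem_univ i)
        have l2 : ∀ j : ι, ∑ i ∈ univ.erase j, phi ((R j).erase (e i)).card
            = (∑ i, phi ((R j).erase (e i)).card) - phi ((R j).erase (e j)).card :=
          fun j => Finset.sum_erase_eq_sub (Finset.mem_univ j)
        simp only [l1, l2]
        rw [Finset.sum_sub_distrib, Finset.sum_sub_distrib, Finset.sum_comm]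
      have h3 : ∀ j : ι, ∑ i ∈ univ.erase j, phi ((R j).erase (e i)).card
          = Real.log ((R j).card - 1).factorial
            + (((M:ℝ)+1) - (R j).card) * phi (R j).card := by
        intro j
        rw [Finset.sum_erase_eq_sub (Finset.mem_univ j)]
        have hre : ∑ i : ι, phi ((R j).erase (e i)).card
            = ∑ k : κ, phi ((R j).erase k).card :=
          Equiv.sum_comp e (fun k => phi ((R j).erase k).card)
        have hsplit : ∑ k : κ, phi ((R j).erase k).card
            = ((R j).card : ℝ) * phi ((R j).card - 1)
              + (((M:ℝ)+1) - (R j).card) * phi (R j).card := by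
          have hterm : ∀ k : κ, phi ((R j).erase k).card
              = if k ∈ R j then phi ((R j).card - 1) else phi (R j).card := by
            intro k
            by_cases hk : k ∈ R j
            · rw [if_pos hk, Finset.card_erase_of_mem hk]
            · rw [if_neg hk, Finset.erase_eq_of_notMem hk]
          rw [Finset.sum_congr rfl (fun k _ => hterm k), Finset.sum_ite, Finset.sum_const,
            Finset.sum_const]
          have hf1 : (Finset.univ.filter (fun k => k ∈ R j)) = R j := by
            ext x; simp
          have hf2 : (Finset.univ.filter (fun k => ¬ k ∈ R j)).card = (M+1) - (R j).card := by
            have : (Finset.univ.filter (fun k => ¬ k ∈ R j)) = (R j)ᶜ := by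
              ext x; simp
            rw [this, Finset.card_compl, hκ]
          rw [hf1, hf2, nsmul_eq_mul, nsmul_eq_mul, Nat.cast_sub (hRle j)]
          push_cast
          ring
        have hej : phi ((R j).erase (e j)).card = phi ((R j).card - 1) := by
          rw [Finset.card_erase_of_mem (hmem e he j)]
        rw [hre, hsplit, hej]
        have hcast : (((R j).card - 1 : ℕ) : ℝ) = ((R j).card : ℝ) - 1 := by
          have h1 : (1:ℕ) ≤ (R j).card := hRpos j
          rw [Nat.cast_sub h1]; norm_num
        rw [← mul_phi ((R j).card - 1), hcast]
        ring
      rw [h2] at h1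
      calc ∑ i, Real.log (c i (e i))
          ≤ ∑ j, ∑ i ∈ univ.erase j, phi ((R j).erase (e i)).card := h1
        _ = ∑ j, (Real.log ((R j).card - 1).factorial
            + (((M:ℝ)+1) - (R j).card) * phi (R j).card) :=
          Finset.sum_congr rfl fun j _ => h3 j
    -- assemble
    have hfinal : Real.log p ≤ ∑ j, phi (R j).card := by
      have hcardι : (Finset.univ : Finset ι).card = M + 1 := by rw [Finset.card_univ, hι]
      have total : ((M:ℝ)+1) * ((p:ℝ) * Real.log p) ≤
          ((M:ℝ)+1) * ((p:ℝ) * ∑ j, phi (R j).card) := by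
        calc ((M:ℝ)+1) * ((p:ℝ) * Real.log p)
            = ∑ _i : ι, (p:ℝ) * Real.log p := by
              rw [Finset.sum_const, hcardι, nsmul_eq_mul]; push_cast; ring
          _ ≤ ∑ i : ι, ((p:ℝ) * Real.log (R i).card
              + ∑ e ∈ goodSet R, Real.log (c i (e i))) :=
              Finset.sum_le_sum fun i _ => step1 i
          _ = (p:ℝ) * (∑ i, Real.log (R i).card)
              + ∑ e ∈ goodSet R, ∑ i, Real.log (c i (e i)) := by
              rw [Finset.sum_add_distrib, ← Finset.mul_sum, Finset.sum_comm]
          _ ≤ (p:ℝ) * (∑ i, Real.log (R i).card)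
              + ∑ _e ∈ goodSet R, ∑ j, (Real.log ((R j).card - 1).factorial
                + (((M:ℝ)+1) - (R j).card) * phi (R j).card) := by
              have := Finset.sum_le_sum step2
              linarith
          _ = (p:ℝ) * ∑ j, (Real.log (R j).card + Real.log ((R j).card - 1).factorial
                + (((M:ℝ)+1) - (R j).card) * phi (R j).card) := by
              rw [Finset.sum_const, ← hpdef, nsmul_eq_mul, ← mul_add, ← Finset.sum_add_distrib]
              congr 1
              exact Finset.sum_congr rfl fun j _ => by ring
          _ = ((M:ℝ)+1) * ((p:ℝ) * ∑ j, phi (R j).card) := by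
              rw [Finset.mul_sum, Finset.mul_sum, Finset.mul_sum]
              refine Finset.sum_congr rfl fun j _ => ?_
              have hlogfac : Real.log (R j).card + Real.log ((R j).card - 1).factorial
                  = ((R j).card : ℝ) * phi (R j).card := by
                rw [mul_phi, ← Real.log_mul (by exact_mod_cast (hRpos j).ne')
                  (by exact_mod_cast (Nat.factorial_pos _).ne')]
                congr 1
                rw [← Nat.cast_mul, Nat.mul_factorial_pred (hRpos j).ne']
              rw [hlogfac]
              ring
      have h := le_of_mul_le_mul_left total (by positivity : (0:ℝ) < (M:ℝ)+1)
      exact le_of_mul_le_mul_left h hppos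
    calc (p:ℝ) = Real.exp (Real.log p) := (Real.exp_log hppos).symm
      _ ≤ Real.exp (∑ j, phi (R j).card) := Real.exp_le_exp.mpr hfinal
      _ = ∏ j, Real.exp (phi (R j).card) := Real.exp_sum _ _
      _ = ∏ j, gfun (R j).card := Finset.prod_congr rfl fun j _ => (gfun_eq_exp _).symm

lemma perm_eq_card {n : ℕ} (A : Matrix (Fin n) (Fin n) ℤ) (hA : ∀ i j, A i j = 0 ∨ A i j = 1) :
    perm A = ((goodSet (fun i : Fin n => univ.filter (fun k => A i k = 1))).card : ℤ) := by
  unfold perm goodSet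
  rw [Finset.card_filter]
  push_cast
  refine Finset.sum_congr rfl (fun σ _ => ?_)
  by_cases h : ∀ i, A i (σ i) = 1
  · rw [if_pos (by intro i; simpa using h i)]
    exact Finset.prod_eq_one fun i _ => h i
  · rw [if_neg (by simpa using h)]
    push_neg at h
    obtain ⟨i, hi⟩ := h
    have : A i (σ i) = 0 := (hA i (σ i)).resolve_right hi
    exact Finset.prod_eq_zero (Finset.mem_univ i) this


/-- For odd `n > 1` and an `n×n` (0,1)-matrix `B`,
`per(B)·per(Jₙ − B) ≤ (((n−1)/2)!)^{2n/(n−1)} · (((n+1)/2)!)^{2n/(n+1)}`. -/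
theorem stmt_16 (n : ℕ) (hn : 1 < n) (hodd : Odd n) (B : Matrix (Fin n) (Fin n) ℤ)
    (hB : ∀ i j, B i j = 0 ∨ B i j = 1) :
    ((perm B * perm (Jmat n - B) : ℤ) : ℝ) ≤
      ((((n - 1) / 2)! : ℝ)) ^ ((2 * (n : ℝ)) / ((n : ℝ) - 1)) *
        ((((n + 1) / 2)! : ℝ)) ^ ((2 * (n : ℝ)) / ((n : ℝ) + 1)) := by
  obtain ⟨m, hm⟩ := hodd
  have hm1 : 1 ≤ m := by omega
  have hB' : ∀ i j, (Jmat n - B) i j = 0 ∨ (Jmat n - B) i j = 1 := by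
    intro i j
    have : (Jmat n - B) i j = 1 - B i j := by simp [Jmat, Matrix.sub_apply]
    rcases hB i j with h | h
    · right; rw [this, h]; ring
    · left; rw [this, h]; ring
  set R : Fin n → Finset (Fin n) := fun i => univ.filter (fun k => B i k = 1) with hR
  set R' : Fin n → Finset (Fin n) := fun i => univ.filter (fun k => (Jmat n - B) i k = 1) with hR'
  have hRc : ∀ i, R' i = (R i)ᶜ := by
    intro i
    ext k
    simp only [hR, hR', Finset.mem_compl, Finset.mem_filter, Finset.mem_univ, true_and]
    have he : (Jmat n - B) i k = 1 - B i k := by simp [Jmat, Matrix.sub_apply]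
    rcases hB i k with h | h <;> simp [he, h]
  have hcard' : ∀ i, (R' i).card = n - (R i).card := by
    intro i
    rw [hRc i, Finset.card_compl, Fintype.card_fin]
  have hp1 := perm_eq_card B hB
  have hp2 := perm_eq_card (Jmat n - B) hB'
  have hRHSpos : (0:ℝ) <
      ((((n - 1) / 2)! : ℝ)) ^ ((2 * (n : ℝ)) / ((n : ℝ) - 1)) *
        ((((n + 1) / 2)! : ℝ)) ^ ((2 * (n : ℝ)) / ((n : ℝ) + 1)) := by
    have f1 : (0:ℝ) < (((n - 1) / 2)! : ℝ) := by exact_mod_cast Nat.factorial_pos _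
    have f2 : (0:ℝ) < (((n + 1) / 2)! : ℝ) := by exact_mod_cast Nat.factorial_pos _
    positivity
  by_cases hedge : (∃ i, (R i).card = 0) ∨ (∃ i, (R i).card = n)
  · -- one of the permanents is zero
    have hzero : perm B = 0 ∨ perm (Jmat n - B) = 0 := by
      rcases hedge with ⟨i, hi⟩ | ⟨i, hi⟩
      · left
        rw [hp1]
        have : goodSet R = ∅ := by
          refine Finset.eq_empty_of_forall_notMem fun e he => ?_
          have h := mem_goodSet.mp he i
          rw [Finset.card_eq_zero.mp hi] at h
          exact absurd h (Finset.notMem_empty _)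
        rw [this]; simp
      · right
        rw [hp2]
        have : goodSet R' = ∅ := by
          refine Finset.eq_empty_of_forall_notMem fun e he => ?_
          have h := mem_goodSet.mp he i
          have : (R' i).card = 0 := by rw [hcard' i, hi]; omega
          rw [Finset.card_eq_zero.mp this] at h
          exact absurd h (Finset.notMem_empty _)
        rw [this]; simp
    rcases hzero with h | h <;> rw [h] <;> simp [hRHSpos.le]
  · push_neg at hedge
    obtain ⟨hlow, hhigh⟩ := hedge
    have hr1 : ∀ i, 1 ≤ (R i).card := fun i => Nat.one_le_iff_ne_zero.mpr (hlow i)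
    have hrle : ∀ i, (R i).card ≤ n := fun i => by
      have := Finset.card_le_univ (R i); simpa using this
    have hrn : ∀ i, (R i).card ≤ n - 1 := fun i => by
      have := hrle i; have := hhigh i; omega
    have hb1 := bregman n (Fin n) (Fin n) (by simp) (by simp) R
    have hb2 := bregman n (Fin n) (Fin n) (by simp) (by simp) R'
    -- pointwise concavity bound
    have hpair : ∀ i, gfun (R i).card * gfun (R' i).card ≤ gfun m * gfun (m+1) := by
      intro i
      rw [hcard' i, gfun_eq_exp, gfun_eq_exp, gfun_eq_exp, gfun_eq_exp, ← Real.exp_add,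
        ← Real.exp_add]
      apply Real.exp_le_exp.mpr
      have hle := hrn i
      have := phi_pair m (R i).card hm1 (hr1 i) (by omega)
      have hnn : n - (R i).card = 2*m+1 - (R i).card := by omega
      rw [hnn]
      exact this
    have hprod : ((goodSet R).card : ℝ) * ((goodSet R').card : ℝ) ≤
        (gfun m * gfun (m+1)) ^ n := by
      calc ((goodSet R).card : ℝ) * ((goodSet R').card : ℝ)
          ≤ (∏ i, gfun (R i).card) * (∏ i, gfun (R' i).card) := by
            apply mul_le_mul hb1 hb2 (by positivity)
            exact Finset.prod_nonneg fun i _ => (gfun_pos _).le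
        _ = ∏ i : Fin n, (gfun (R i).card * gfun (R' i).card) := by
            rw [← Finset.prod_mul_distrib]
        _ ≤ ∏ _i : Fin n, (gfun m * gfun (m+1)) := by
            apply Finset.prod_le_prod
            · intro i _
              exact mul_nonneg (gfun_pos _).le (gfun_pos _).le
            · intro i _
              exact hpair i
        _ = (gfun m * gfun (m+1)) ^ n := by
            rw [Finset.prod_const, Finset.card_univ, Fintype.card_fin]
    -- identify the RHS
    have hm_eq : (n - 1) / 2 = m := by omega
    have hm1_eq : (n + 1) / 2 = m + 1 := by omega
    have hmr : (m:ℝ) = ((n:ℝ) - 1) / 2 := by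
      have : (n:ℝ) = 2*(m:ℝ)+1 := by exact_mod_cast congrArg (Nat.cast : ℕ → ℝ) hm
      rw [this]; ring
    have hmne : (m:ℝ) ≠ 0 := by positivity
    have hRHS : (gfun m * gfun (m+1)) ^ n =
        ((((n - 1) / 2)! : ℝ)) ^ ((2 * (n : ℝ)) / ((n : ℝ) - 1)) *
          ((((n + 1) / 2)! : ℝ)) ^ ((2 * (n : ℝ)) / ((n : ℝ) + 1)) := by
      rw [hm_eq, hm1_eq, mul_pow]
      unfold gfun
      rw [← Real.rpow_natCast ((m.factorial : ℝ) ^ ((1:ℝ)/(m:ℝ))) n,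
        ← Real.rpow_natCast (((m+1).factorial : ℝ) ^ ((1:ℝ)/(((m+1):ℕ):ℝ))) n,
        ← Real.rpow_mul (by positivity), ← Real.rpow_mul (by positivity)]
      have hn_eq : (n:ℝ) = 2*(m:ℝ)+1 := by exact_mod_cast congrArg (Nat.cast : ℕ → ℝ) hm
      have hm0 : (0:ℝ) < (m:ℝ) := by positivity
      have e2 : (1:ℝ)/((m:ℕ):ℝ) * n = 2 * (n:ℝ) / ((n:ℝ) - 1) := by
        rw [hn_eq] <;> field_simp <;> ring
      have e3 : (1:ℝ)/(((m+1:ℕ)):ℝ) * n = 2 * (n:ℝ) / ((n:ℝ) + 1) := by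
        have hcast : ((m+1:ℕ):ℝ) = (m:ℝ)+1 := by push_cast; ring
        rw [hcast, hn_eq] <;> field_simp <;> ring
      rw [e2, e3]
    rw [hp1, hp2]
    push_cast
    rw [← hRHS]
    exact hprod
end
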